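/- arXiv:2412.06381 — 5 statements merged into one kernel-verified Lean document; each statement's English description precedes it below -/
import Mathlib

section
/- (Local Robustness generalization bound.) Let A map each dataset S \in Z^n to a model h = A(S) whose loss \ell_h is measurable with values in [0, C] where C = \sup_{z \in Z} \ell_h(z). For S consisting of n i.i.d. samples from P and any \delta > 0, with probability at least 1 - \delta over the draw of S: F(P,h) \le C(\sqrt{2}+1) \sqrt{ |T_S| \ln(2K/\delta) / n } + 2 C |T_S| \ln(2K/\delta) / n + F(S,h) + \sum_{i \in T_S} (n_i/n) \epsilon_i(h). -/
open MeasureTheory Finset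

open scoped Classical in
/-- Number of sample points of `S` falling in the region `A`. -/
noncomputable def cnt {Z : Type*} {n : ℕ} (S : Fin n → Z) (A : Set Z) : ℕ :=
  (Finset.univ.filter (fun j => S j ∈ A)).card

/-- Indices of the regions that contain at least one sample point. -/
noncomputable def Tset {Z : Type*} {n K : ℕ} (S : Fin n → Z) (Zpart : Fin K → Set Z) :
    Finset (Fin K) :=
  Finset.univ.filter (fun i => 0 < cnt S (Zpart i))

/-- Empirical loss of `ℓ` on the sample `S`. -/
noncomputable def empLoss {Z : Type*} {n : ℕ} (ℓ : Z → ℝ) (S : Fin n → Z) : ℝ :=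
  (∑ j, ℓ (S j)) / n

open scoped Classical in
/-- Empirical loss of `ℓ` on the subsample of `S` lying in `A`. -/
noncomputable def empLossIn {Z : Type*} {n : ℕ} (ℓ : Z → ℝ) (S : Fin n → Z) (A : Set Z) : ℝ :=
  (∑ j ∈ Finset.univ.filter (fun j => S j ∈ A), ℓ (S j)) / (cnt S A : ℝ)

/-- Conditional expectation `E[ℓ z ∣ z ∈ A]`. -/
noncomputable def condAvg {Z : Type*} [MeasurableSpace Z] (P : Measure Z) (ℓ : Z → ℝ)
    (A : Set Z) : ℝ :=
  (∫ z in A, ℓ z ∂P) / (P A).toReal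

/-- Worst-case local robustness level `sup_{s ∈ S ∩ A, z ∈ A} |ℓ s - ℓ z|`. -/
noncomputable def epsSup {Z : Type*} {n : ℕ} (ℓ : Z → ℝ) (S : Fin n → Z) (A : Set Z) : ℝ :=
  sSup {x : ℝ | ∃ j : Fin n, S j ∈ A ∧ ∃ z ∈ A, x = |ℓ (S j) - ℓ z|}

open scoped Classical in
/-- Average local sensitivity `(1/n_i) ∑_{s ∈ S ∩ A} E[|ℓ z - ℓ s| ∣ z ∈ A]`. -/
noncomputable def epsBar {Z : Type*} [MeasurableSpace Z] {n : ℕ} (P : Measure Z) (ℓ : Z → ℝ)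
    (S : Fin n → Z) (A : Set Z) : ℝ :=
  (∑ j ∈ Finset.univ.filter (fun j => S j ∈ A),
    condAvg P (fun z => |ℓ z - ℓ (S j)|) A) / (cnt S A : ℝ)

open Real
open scoped Classical ENNReal

-- exp bound
lemma exp_le_quad {x : ℝ} (h0 : 0 ≤ x) (h1 : x ≤ 1) : Real.exp x ≤ 1 + x + (3/4) * x ^ 2 := by
  have := Real.exp_bound (x := x) (by rw [abs_of_nonneg h0]; exact h1) (n := 2) (by norm_num)
  rw [abs_of_nonneg h0] at this
  have h2 : ∑ i ∈ Finset.range 2, x ^ i / (Nat.factorial i) = 1 + x := by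
    simp [Finset.sum_range_succ]
  rw [h2] at this
  have := abs_le.mp this
  norm_num at this ⊢
  nlinarith [this.2]

lemma cnt_cast {Z : Type*} {n : ℕ} (S : Fin n → Z) (A : Set Z) :
    (cnt S A : ℝ) = ∑ j : Fin n, (if S j ∈ A then (1:ℝ) else 0) := by
  rw [cnt, Finset.card_filter]
  push_cast
  rfl

lemma measurable_cnt {Z : Type*} [MeasurableSpace Z] {n : ℕ} (A : Set Z) (hA : MeasurableSet A) :
    Measurable fun S : Fin n → Z => (cnt S A : ℝ) := by
  classical
  simp only [cnt_cast]
  refine Finset.measurable_sum _ fun j _ => ?_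
  exact Measurable.ite ((measurable_pi_apply j) hA) measurable_const measurable_const

lemma integral_bernoulli {Z : Type*} [MeasurableSpace Z] (P : Measure Z) [IsProbabilityMeasure P]
    (A : Set Z) (hA : MeasurableSet A) (c : ℝ) :
    ∫ z, (if z ∈ A then c else 1) ∂P = (P A).toReal * c + (1 - (P A).toReal) := by
  classical
  have h : (fun z => if z ∈ A then c else 1) = fun z => A.indicator (fun _ => c - 1) z + 1 := by
    funext z
    by_cases hz : z ∈ A <;> simp [Set.indicator, hz]
  rw [h, integral_add ((integrable_const (c-1)).indicator hA) (integrable_const 1)]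
  rw [integral_indicator_const _ hA]
  simp [mul_comm]
  simp only [measureReal_def]; ring

-- step A : mgf bound for cnt under a pi measure
lemma mgf_cnt_le {Z : Type*} [MeasurableSpace Z] (P : Measure Z) [IsProbabilityMeasure P]
    {n : ℕ} (A : Set Z) (hA : MeasurableSet A) {lam : ℝ} (h0 : 0 ≤ lam) (h1 : lam ≤ 1) :
    ∫ S, Real.exp (lam * (cnt S A : ℝ)) ∂(Measure.pi fun _ : Fin n => P)
      ≤ Real.exp ((n : ℝ) * (P A).toReal * (lam + (3/4) * lam ^ 2)) := by
  letI : MeasureSpace Z := ⟨P⟩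
  set p := (P A).toReal with hp
  have hp0 : 0 ≤ p := ENNReal.toReal_nonneg
  have hp1 : p ≤ 1 := by
    rw [hp]
    exact ENNReal.toReal_le_of_le_ofReal one_pos.le (by simpa using prob_le_one (μ := P) (s := A))
  have hcalc : ∫ S, Real.exp (lam * (cnt S A : ℝ)) ∂(Measure.pi fun _ : Fin n => P)
      = (p * Real.exp lam + (1 - p)) ^ n := by
    have hfun : (fun S : Fin n → Z => Real.exp (lam * (cnt S A : ℝ)))
        = fun S => ∏ j : Fin n, (if S j ∈ A then Real.exp lam else 1) := by
      funext S
      rw [cnt_cast, Finset.mul_sum, Real.exp_sum]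
      congr 1
      funext j
      by_cases hj : S j ∈ A <;> simp [hj]
    rw [hfun]
    have : (Measure.pi fun _ : Fin n => P) = (volume : Measure (Fin n → Z)) := by
      rw [volume_pi]; rfl
    rw [this]
    rw [volume_pi, MeasureTheory.integral_fintype_prod_eq_pow (ι := Fin n) (f := fun z : Z => if z ∈ A then Real.exp lam else 1)]
    have := integral_bernoulli P A hA (Real.exp lam)
    rw [show (volume : Measure Z) = P from rfl, this]
    simp [mul_comm]
    rfl
  rw [hcalc]
  have he : 0 ≤ Real.exp lam - 1 := by nlinarith [Real.exp_pos lam, Real.add_one_le_exp lam]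
  have hbase0 : 0 ≤ p * Real.exp lam + (1 - p) := by nlinarith
  have hstep : p * Real.exp lam + (1 - p) ≤ Real.exp (p * (lam + (3/4) * lam ^ 2)) := by
    have h2 : p * Real.exp lam + (1 - p) = 1 + p * (Real.exp lam - 1) := by ring
    have h3 : 1 + p * (Real.exp lam - 1) ≤ Real.exp (p * (Real.exp lam - 1)) := by
      have := Real.add_one_le_exp (p * (Real.exp lam - 1)); linarith
    have h4 : Real.exp lam - 1 ≤ lam + (3/4) * lam ^ 2 := by
      nlinarith [exp_le_quad h0 h1]
    have h5 : p * (Real.exp lam - 1) ≤ p * (lam + (3/4) * lam ^ 2) := by nlinarith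
    calc p * Real.exp lam + (1 - p) = 1 + p * (Real.exp lam - 1) := h2
      _ ≤ Real.exp (p * (Real.exp lam - 1)) := h3
      _ ≤ Real.exp (p * (lam + (3/4) * lam ^ 2)) := Real.exp_le_exp.mpr h5
  calc (p * Real.exp lam + (1 - p)) ^ n ≤ (Real.exp (p * (lam + (3/4) * lam ^ 2))) ^ n :=
        pow_le_pow_left₀ hbase0 hstep n
    _ = Real.exp ((n : ℝ) * p * (lam + (3/4) * lam ^ 2)) := by
        rw [← Real.exp_nat_mul]; ring_nf

lemma exponent_ineq {a L : ℝ} (ha : 0 < a) (hL : 0 < L) :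
    L ≤ (min 1 (Real.sqrt (2*L/a))) * (Real.sqrt (2*a*L) + L)
        - (a/2) * (min 1 (Real.sqrt (2*L/a)))^2 := by
  have h2aL : (0:ℝ) ≤ 2*a*L := by positivity
  have hs2 : (Real.sqrt (2*a*L))^2 = 2*a*L := Real.sq_sqrt h2aL
  have hsn : 0 ≤ Real.sqrt (2*a*L) := Real.sqrt_nonneg _
  rcases le_total (Real.sqrt (2*L/a)) 1 with hc | hc
  · rw [min_eq_right hc]
    have hq : (0:ℝ) ≤ 2*L/a := by positivity
    have h1 : (Real.sqrt (2*L/a))^2 = 2*L/a := Real.sq_sqrt hq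
    have h2 : Real.sqrt (2*L/a) * Real.sqrt (2*a*L) = 2*L := by
      rw [← Real.sqrt_mul hq]
      have : 2*L/a * (2*a*L) = (2*L)^2 := by field_simp
      rw [this, Real.sqrt_sq (by linarith)]
    have h3 : 0 ≤ Real.sqrt (2*L/a) := Real.sqrt_nonneg _
    have h4 : a/2 * (Real.sqrt (2*L/a))^2 = L := by rw [h1]; field_simp
    nlinarith
  · rw [min_eq_left hc]
    have ha2L : a ≤ 2*L := by
      by_contra hcon
      push_neg at hcon
      have h5 : 2*L/a < 1 := (div_lt_one ha).mpr (by linarith)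
      have h6 := Real.sqrt_lt_sqrt (by positivity) h5
      rw [Real.sqrt_one] at h6
      linarith
    have : a/2 ≤ Real.sqrt (2*a*L) := by nlinarith
    nlinarith

lemma cnt_tail {Z : Type*} [MeasurableSpace Z] (P : Measure Z) [IsProbabilityMeasure P]
    {n : ℕ} (hn : 0 < n) (A : Set Z) (hA : MeasurableSet A) {L : ℝ} (hL : 0 < L)
    (hp : 0 < (P A).toReal) :
    (Measure.pi fun _ : Fin n => P)
      {S | (n : ℝ) * (P A).toReal + (Real.sqrt (3 * n * (P A).toReal * L) + L) ≤ (cnt S A : ℝ)}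
      ≤ ENNReal.ofReal (Real.exp (-L)) := by
  set μ := Measure.pi fun _ : Fin n => P with hμ
  haveI : IsProbabilityMeasure μ := by rw [hμ]; infer_instance
  set p := (P A).toReal with hpdef
  set a := (3/2) * n * p with hadef
  have ha : 0 < a := by
    have : (0:ℝ) < n := Nat.cast_pos.mpr hn
    positivity
  set lam := min 1 (Real.sqrt (2*L/a)) with hlam
  have hlam0 : 0 < lam := lt_min one_pos (Real.sqrt_pos.mpr (by positivity))
  have hlam1 : lam ≤ 1 := min_le_left _ _
  set X := fun S : Fin n → Z => (cnt S A : ℝ) with hX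
  have hXmeas : Measurable X := measurable_cnt A hA
  have hXle : ∀ S, X S ≤ n := by
    intro S
    simp only [hX, cnt]
    have h := Finset.card_filter_le (Finset.univ : Finset (Fin n)) (fun j => S j ∈ A)
    rw [Finset.card_univ, Fintype.card_fin] at h
    exact_mod_cast h
  have hX0 : ∀ S, 0 ≤ X S := fun S => Nat.cast_nonneg _
  have hint : Integrable (fun S => Real.exp (lam * X S)) μ := by
    refine (integrable_const (Real.exp (lam * n))).mono'
      (Real.measurable_exp.comp (hXmeas.const_mul lam)).aestronglyMeasurable
      (Filter.Eventually.of_forall fun S => ?_)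
    rw [Real.norm_eq_abs, abs_of_pos (Real.exp_pos _)]
    exact Real.exp_le_exp.mpr (mul_le_mul_of_nonneg_left (hXle S) hlam0.le)
  set c := (n : ℝ) * p + (Real.sqrt (3 * n * p * L) + L) with hc
  have hcher := ProbabilityTheory.measure_ge_le_exp_mul_mgf (μ := μ) (X := X) c hlam0.le hint
  have hmgf : ProbabilityTheory.mgf X μ lam ≤ Real.exp ((n : ℝ) * p * (lam + (3/4) * lam ^ 2)) :=
    mgf_cnt_le P A hA hlam0.le hlam1
  have hfinal : Real.exp (-lam * c) * ProbabilityTheory.mgf X μ lam ≤ Real.exp (-L) := by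
    calc Real.exp (-lam * c) * ProbabilityTheory.mgf X μ lam
        ≤ Real.exp (-lam * c) * Real.exp ((n : ℝ) * p * (lam + (3/4) * lam ^ 2)) := by
          exact mul_le_mul_of_nonneg_left hmgf (Real.exp_pos _).le
      _ = Real.exp (-lam * c + (n : ℝ) * p * (lam + (3/4) * lam ^ 2)) := by
          rw [← Real.exp_add]
      _ ≤ Real.exp (-L) := by
          apply Real.exp_le_exp.mpr
          have key := exponent_ineq ha hL
          have hsqeq : Real.sqrt (3 * n * p * L) = Real.sqrt (2*a*L) := by
            congr 1
            rw [hadef]; ring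
          rw [hc, hsqeq]
          nlinarith [key]
  calc μ {S | c ≤ X S} ≤ ENNReal.ofReal (Real.exp (-lam * c) * ProbabilityTheory.mgf X μ lam) := by
        rw [ENNReal.le_ofReal_iff_toReal_le (measure_ne_top _ _)
          (mul_nonneg (Real.exp_pos _).le ProbabilityTheory.mgf_nonneg)]
        exact hcher
    _ ≤ ENNReal.ofReal (Real.exp (-L)) := ENNReal.ofReal_le_ofReal hfinal

set_option maxHeartbeats 2000000 in
lemma deterministic {Z : Type*} [MeasurableSpace Z] (P : Measure Z) [IsProbabilityMeasure P]
    (hZne : Nonempty Z)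
    {K : ℕ} (Zpart : Fin K → Set Z)
    (hZmeas : ∀ i, MeasurableSet (Zpart i))
    (hZdisj : ∀ i j, i ≠ j → Disjoint (Zpart i) (Zpart j))
    (hZcover : (⋃ i, Zpart i) = Set.univ)
    {n : ℕ} (hn : 0 < n) (f : Z → ℝ) (hfmeas : Measurable f) (hfnonneg : ∀ z, 0 ≤ f z)
    (hfbdd : BddAbove (Set.range f))
    (S : Fin n → Z) {L : ℝ} (hL : 0 < L)
    (hgood : ∀ i, (cnt S (Zpart i) : ℝ)
      ≤ n * (P (Zpart i)).toReal + (Real.sqrt (3 * n * (P (Zpart i)).toReal * L) + L)) :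
    ∫ z, f z ∂P ≤ (⨆ z, f z) * (Real.sqrt 2 + 1) * Real.sqrt (((Tset S Zpart).card : ℝ) * L / n)
      + 2 * (⨆ z, f z) * ((Tset S Zpart).card : ℝ) * L / n
      + empLoss f S
      + ∑ i ∈ Tset S Zpart, ((cnt S (Zpart i) : ℝ) / n) * epsSup f S (Zpart i) := by
  obtain ⟨z₀⟩ := hZne
  set C := ⨆ z, f z with hC
  have hCub : ∀ z, f z ≤ C := fun z => le_ciSup hfbdd z
  have hC0 : 0 ≤ C := (hfnonneg z₀).trans (hCub z₀)
  set p := fun i => (P (Zpart i)).toReal with hpdef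
  have hp0 : ∀ i, 0 ≤ p i := fun i => ENNReal.toReal_nonneg
  set q := fun i => (cnt S (Zpart i) : ℝ) / n with hqdef
  have hq0 : ∀ i, 0 ≤ q i := fun i => by positivity
  set T := Tset S Zpart with hT
  have hnpos : (0:ℝ) < n := Nat.cast_pos.mpr hn
  -- index function
  have hidx : ∀ j : Fin n, ∃ i, S j ∈ Zpart i := by
    intro j
    have : S j ∈ ⋃ i, Zpart i := by rw [hZcover]; trivial
    exact Set.mem_iUnion.mp this
  choose idx hidxmem using hidx
  have hidxuniq : ∀ j i, S j ∈ Zpart i → i = idx j := by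
    intro j i hij
    by_contra hne
    exact Set.disjoint_left.mp (hZdisj i (idx j) hne) hij (hidxmem j)
  have hfilter : ∀ i, Finset.univ.filter (fun j => S j ∈ Zpart i)
      = Finset.univ.filter (fun j => idx j = i) := by
    intro i
    ext j
    simp only [Finset.mem_filter, Finset.mem_univ, true_and]
    constructor
    · exact fun h => (hidxuniq j i h).symm
    · rintro rfl; exact hidxmem j
  -- fiberwise sums
  have hfib : ∀ g : Fin n → ℝ,
      ∑ i : Fin K, ∑ j ∈ Finset.univ.filter (fun j => S j ∈ Zpart i), g j = ∑ j, g j := by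
    intro g
    calc ∑ i : Fin K, ∑ j ∈ Finset.univ.filter (fun j => S j ∈ Zpart i), g j
        = ∑ i : Fin K, ∑ j ∈ Finset.univ.filter (fun j => idx j = i), g j := by
          refine Finset.sum_congr rfl fun i _ => ?_
          rw [hfilter]
      _ = ∑ j, g j := Finset.sum_fiberwise _ _ _
  have hcnt_out : ∀ i ∉ T, cnt S (Zpart i) = 0 := by
    intro i hi
    rw [hT, Tset, Finset.mem_filter] at hi
    push_neg at hi
    have := hi (Finset.mem_univ i)
    omega
  have hfib' : ∀ g : Fin n → ℝ,
      ∑ i ∈ T, ∑ j ∈ Finset.univ.filter (fun j => S j ∈ Zpart i), g j = ∑ j, g j := by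
    intro g
    rw [← hfib g]
    apply Finset.sum_subset (Finset.subset_univ T)
    intro i _ hi
    have h0 : (Finset.univ.filter (fun j => S j ∈ Zpart i)).card = 0 := hcnt_out i hi
    rw [Finset.card_eq_zero.mp h0, Finset.sum_empty]
  have hq_sum : ∑ i ∈ T, q i = 1 := by
    have h1 : ∑ i ∈ T, (cnt S (Zpart i) : ℝ) = n := by
      have := hfib' (fun _ => (1:ℝ))
      simpa [cnt, Finset.sum_const] using this
    rw [hqdef]
    rw [← Finset.sum_div, h1, div_self hnpos.ne']
  have hp_sum : ∑ i : Fin K, p i = 1 := by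
    have hP : P Set.univ = ∑ i : Fin K, P (Zpart i) := by
      rw [← hZcover, measure_iUnion (fun i j hij => hZdisj i j hij) hZmeas, tsum_fintype]
    have : (1:ℝ≥0∞) = ∑ i : Fin K, P (Zpart i) := by rw [← hP, measure_univ]
    have h2 := congrArg ENNReal.toReal this
    rw [ENNReal.toReal_sum (fun i _ => measure_ne_top P _)] at h2
    simpa using h2.symm
  -- epsSup facts
  have hEbdd : ∀ i, BddAbove {x : ℝ | ∃ j : Fin n, S j ∈ Zpart i ∧ ∃ z ∈ Zpart i, x = |f (S j) - f z|} := by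
    intro i
    refine ⟨C, fun x hx => ?_⟩
    obtain ⟨j, hj, z, hz, rfl⟩ := hx
    rw [abs_sub_le_iff]
    constructor <;> nlinarith [hCub (S j), hCub z, hfnonneg (S j), hfnonneg z]
  have hmemT : ∀ i ∈ T, ∃ j : Fin n, S j ∈ Zpart i := by
    intro i hi
    rw [hT, Tset, Finset.mem_filter] at hi
    obtain ⟨j, hj⟩ := Finset.card_pos.mp hi.2
    rw [Finset.mem_filter] at hj
    exact ⟨j, hj.2⟩
  have heps0 : ∀ i ∈ T, 0 ≤ epsSup f S (Zpart i) := by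
    intro i hi
    obtain ⟨j, hj⟩ := hmemT i hi
    have : (0:ℝ) ∈ {x : ℝ | ∃ j : Fin n, S j ∈ Zpart i ∧ ∃ z ∈ Zpart i, x = |f (S j) - f z|} :=
      ⟨j, hj, S j, hj, by simp⟩
    exact le_csSup (hEbdd i) this
  have hcntpos : ∀ i ∈ T, (0:ℝ) < (cnt S (Zpart i) : ℝ) := by
    intro i hi
    rw [hT, Tset, Finset.mem_filter] at hi
    exact_mod_cast hi.2
  have havg0 : ∀ i, 0 ≤ empLossIn f S (Zpart i) := by
    intro i
    rw [empLossIn]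
    apply div_nonneg _ (Nat.cast_nonneg _)
    exact Finset.sum_nonneg fun j _ => hfnonneg _
  have hkey : ∀ i ∈ T, ∀ z ∈ Zpart i,
      f z ≤ empLossIn f S (Zpart i) + epsSup f S (Zpart i) := by
    intro i hi z hz
    set eps := epsSup f S (Zpart i) with hepsd
    set F := Finset.univ.filter (fun j => S j ∈ Zpart i) with hF
    have hcnt : (0:ℝ) < (cnt S (Zpart i) : ℝ) := hcntpos i hi
    have hsum : (cnt S (Zpart i) : ℝ) * f z ≤ (∑ j ∈ F, f (S j)) + (cnt S (Zpart i) : ℝ) * eps := by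
      have h2 : ∀ j ∈ F, f z ≤ f (S j) + eps := by
        intro j hj
        rw [hF, Finset.mem_filter] at hj
        have hmem : |f (S j) - f z| ∈
            {x : ℝ | ∃ j : Fin n, S j ∈ Zpart i ∧ ∃ w ∈ Zpart i, x = |f (S j) - f w|} :=
          ⟨j, hj.2, z, hz, rfl⟩
        have hle := le_csSup (hEbdd i) hmem
        have h3 : f z - f (S j) ≤ |f (S j) - f z| := by
          rw [abs_sub_comm]; exact le_abs_self _
        have heq : eps = sSup {x : ℝ | ∃ j : Fin n, S j ∈ Zpart i ∧ ∃ w ∈ Zpart i, x = |f (S j) - f w|} := by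
          rw [hepsd, epsSup]
        rw [heq]
        linarith
      have h3 : ∑ j ∈ F, f z ≤ ∑ j ∈ F, (f (S j) + eps) := Finset.sum_le_sum h2
      simp only [Finset.sum_add_distrib, Finset.sum_const, nsmul_eq_mul] at h3
      have hFcard : (F.card : ℝ) = (cnt S (Zpart i) : ℝ) := by rw [hF, cnt]
      rw [hFcard] at h3
      exact h3
    have h4 : f z ≤ ((∑ j ∈ F, f (S j)) + (cnt S (Zpart i) : ℝ) * eps) / (cnt S (Zpart i) : ℝ) := by
      rw [le_div_iff₀ hcnt]
      nlinarith
    have h5 : ((∑ j ∈ F, f (S j)) + (cnt S (Zpart i) : ℝ) * eps) / (cnt S (Zpart i) : ℝ)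
        = (∑ j ∈ F, f (S j)) / (cnt S (Zpart i) : ℝ) + eps := by
      field_simp
    rw [h5] at h4
    rw [empLossIn]
    exact h4
  -- integral bounds
  have hIntf : Integrable f P := by
    refine (integrable_const C).mono' hfmeas.aestronglyMeasurable
      (Filter.Eventually.of_forall fun z => ?_)
    rw [Real.norm_eq_abs, abs_of_nonneg (hfnonneg z)]
    exact hCub z
  have hIbound : ∀ (i : Fin K) (m : ℝ), (∀ z ∈ Zpart i, f z ≤ m) →
      ∫ z in Zpart i, f z ∂P ≤ p i * m := by
    intro i m hm
    calc ∫ z in Zpart i, f z ∂P ≤ ∫ _ in Zpart i, m ∂P :=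
          setIntegral_mono_on hIntf.integrableOn (integrable_const m).integrableOn (hZmeas i) hm
      _ = p i * m := by rw [setIntegral_const, smul_eq_mul]; rfl
  have hsplit : ∫ z, f z ∂P = ∑ i : Fin K, ∫ z in Zpart i, f z ∂P := by
    rw [← setIntegral_univ, ← hZcover,
      integral_iUnion hZmeas (fun i j hij => hZdisj i j hij) hIntf.integrableOn, tsum_fintype]
  -- main chain
  have aux1 : ∀ pp qq m ae c : ℝ, 0 ≤ qq → 0 ≤ m → m ≤ ae → m ≤ c → 0 ≤ c →
      pp * m ≤ qq * ae + max (pp - qq) 0 * c := by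
    intro pp qq m ae c h1 h2 h3 h4 h5
    rcases le_total pp qq with h | h
    · rw [max_eq_right (by linarith)]
      nlinarith
    · rw [max_eq_left (by linarith)]
      nlinarith
  have hmain : ∑ i : Fin K, ∫ z in Zpart i, f z ∂P
      ≤ ∑ i ∈ T, (q i * (empLossIn f S (Zpart i) + epsSup f S (Zpart i))
          + max (p i - q i) 0 * C) + ∑ i ∈ Tᶜ, p i * C := by
    rw [← Finset.sum_add_sum_compl T]
    refine add_le_add (Finset.sum_le_sum fun i hi => ?_) (Finset.sum_le_sum fun i _ => ?_)
    · set m := min (empLossIn f S (Zpart i) + epsSup f S (Zpart i)) C with hm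
      have h1 : ∫ z in Zpart i, f z ∂P ≤ p i * m :=
        hIbound i m fun z hz => le_min (hkey i hi z hz) (hCub z)
      refine h1.trans ?_
      exact aux1 (p i) (q i) m _ C (hq0 i)
        (le_min (add_nonneg (havg0 i) (heps0 i hi)) hC0)
        (min_le_left _ _) (min_le_right _ _) hC0
    · exact hIbound i C fun z _ => hCub z
  -- identity: plus-part + missing mass = other plus-part
  have hTc : ∑ i ∈ Tᶜ, p i = ∑ i ∈ T, (q i - p i) := by
    have h1 : ∑ i ∈ T, p i + ∑ i ∈ Tᶜ, p i = 1 := by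
      rw [Finset.sum_add_sum_compl, hp_sum]
    rw [Finset.sum_sub_distrib, hq_sum]
    linarith
  have hid : ∑ i ∈ T, max (p i - q i) 0 + ∑ i ∈ Tᶜ, p i = ∑ i ∈ T, max (q i - p i) 0 := by
    rw [hTc, ← Finset.sum_add_distrib]
    refine Finset.sum_congr rfl fun i _ => ?_
    rcases le_total (p i) (q i) with h | h
    · rw [max_eq_right (by linarith), max_eq_left (by linarith)]
      ring
    · rw [max_eq_left (by linarith), max_eq_right (by linarith)]
      ring
  -- good event per-region bound
  have hsq : ∀ i, Real.sqrt (3 * ↑n * p i * L) = ↑n * Real.sqrt (3 * p i * L / ↑n) := by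
    intro i
    rw [show 3 * (n:ℝ) * p i * L = (n:ℝ)^2 * (3 * p i * L / ↑n) by field_simp,
      Real.sqrt_mul (sq_nonneg _), Real.sqrt_sq hnpos.le]
  have hgoodq : ∀ i ∈ T, max (q i - p i) 0 ≤ Real.sqrt (3 * p i * L / ↑n) + L / ↑n := by
    intro i _
    apply max_le _ (by positivity)
    have h := hgood i
    rw [hsq i] at h
    have h2 : (Real.sqrt (3 * p i * L / ↑n) + L / ↑n + p i) * ↑n
        = ↑n * p i + (↑n * Real.sqrt (3 * p i * L / ↑n) + L) := by
      field_simp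
      ring
    show (cnt S (Zpart i) : ℝ) / ↑n - p i ≤ _
    rw [sub_le_iff_le_add, div_le_iff₀ hnpos, h2]
    exact h
  -- Cauchy-Schwarz
  have hsplitsqrt : ∀ i, Real.sqrt (3 * p i * L / ↑n)
      = Real.sqrt (p i) * Real.sqrt (3 * L / ↑n) := by
    intro i
    rw [← Real.sqrt_mul (hp0 i)]
    congr 1
    ring
  have hsumsqrtp : ∑ i ∈ T, Real.sqrt (p i) ≤ Real.sqrt (#T : ℝ) := by
    have h1 : (∑ i ∈ T, Real.sqrt (p i))^2 ≤ (#T : ℝ) * ∑ i ∈ T, (Real.sqrt (p i))^2 :=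
      sq_sum_le_card_mul_sum_sq
    have h2 : ∑ i ∈ T, (Real.sqrt (p i))^2 = ∑ i ∈ T, p i :=
      Finset.sum_congr rfl fun i _ => Real.sq_sqrt (hp0 i)
    have h3 : ∑ i ∈ T, p i ≤ 1 := by
      rw [← hp_sum]
      exact Finset.sum_le_sum_of_subset_of_nonneg (Finset.subset_univ T) fun i _ _ => hp0 i
    have h4 : (0:ℝ) ≤ ∑ i ∈ T, Real.sqrt (p i) :=
      Finset.sum_nonneg fun i _ => Real.sqrt_nonneg _
    have h5 : (∑ i ∈ T, Real.sqrt (p i))^2 ≤ (#T : ℝ) := by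
      rw [h2] at h1
      nlinarith [Nat.cast_nonneg (α := ℝ) (#T)]
    nlinarith [Real.sq_sqrt (Nat.cast_nonneg (α := ℝ) (#T)), Real.sqrt_nonneg ((#T : ℝ))]
  have hCS : ∑ i ∈ T, Real.sqrt (3 * p i * L / ↑n)
      ≤ Real.sqrt 3 * Real.sqrt (#T : ℝ) * Real.sqrt (L / ↑n) := by
    calc ∑ i ∈ T, Real.sqrt (3 * p i * L / ↑n)
        = (∑ i ∈ T, Real.sqrt (p i)) * Real.sqrt (3 * L / ↑n) := by
          rw [Finset.sum_mul]
          exact Finset.sum_congr rfl fun i _ => hsplitsqrt i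
      _ ≤ Real.sqrt (#T : ℝ) * Real.sqrt (3 * L / ↑n) :=
          mul_le_mul_of_nonneg_right hsumsqrtp (Real.sqrt_nonneg _)
      _ = Real.sqrt 3 * Real.sqrt (#T : ℝ) * Real.sqrt (L / ↑n) := by
          rw [show 3 * L / ↑n = 3 * (L / ↑n) by ring,
            Real.sqrt_mul (by norm_num : (0:ℝ) ≤ 3)]
          ring
  -- empirical identity
  have hemp : ∑ i ∈ T, q i * empLossIn f S (Zpart i) = empLoss f S := by
    have h1 : ∀ i ∈ T, q i * empLossIn f S (Zpart i)
        = (∑ j ∈ Finset.univ.filter (fun j => S j ∈ Zpart i), f (S j)) / ↑n := by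
      intro i hi
      have hc := (hcntpos i hi).ne'
      show (cnt S (Zpart i) : ℝ) / ↑n * empLossIn f S (Zpart i) = _
      rw [empLossIn]
      field_simp
    rw [Finset.sum_congr rfl h1, ← Finset.sum_div, hfib' (fun j => f (S j)), empLoss]
  -- final assembly
  have hplus0 : 0 ≤ ∑ i ∈ T, max (q i - p i) 0 :=
    Finset.sum_nonneg fun i _ => le_max_right _ _
  have hstep1 : ∑ i ∈ T, max (q i - p i) 0
      ≤ Real.sqrt 3 * Real.sqrt (#T : ℝ) * Real.sqrt (L / ↑n) + (#T : ℝ) * (L / ↑n) := by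
    calc ∑ i ∈ T, max (q i - p i) 0
        ≤ ∑ i ∈ T, (Real.sqrt (3 * p i * L / ↑n) + L / ↑n) := Finset.sum_le_sum hgoodq
      _ = (∑ i ∈ T, Real.sqrt (3 * p i * L / ↑n)) + (#T : ℝ) * (L / ↑n) := by
          rw [Finset.sum_add_distrib, Finset.sum_const, nsmul_eq_mul]
      _ ≤ _ := by linarith [hCS]
  have hsqrt23 : Real.sqrt 3 ≤ Real.sqrt 2 + 1 := by
    nlinarith [Real.sq_sqrt (show (0:ℝ) ≤ 3 by norm_num),
      Real.sq_sqrt (show (0:ℝ) ≤ 2 by norm_num), Real.sqrt_nonneg (3:ℝ), Real.sqrt_nonneg (2:ℝ)]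
  have hsqrtTL : Real.sqrt ((#T : ℝ) * L / ↑n) = Real.sqrt (#T : ℝ) * Real.sqrt (L / ↑n) := by
    rw [show (#T : ℝ) * L / ↑n = (#T : ℝ) * (L / ↑n) by ring,
      Real.sqrt_mul (Nat.cast_nonneg _)]
  have hconst : C * (Real.sqrt 3 * Real.sqrt (#T : ℝ) * Real.sqrt (L / ↑n) + (#T : ℝ) * (L / ↑n))
      ≤ C * (Real.sqrt 2 + 1) * Real.sqrt ((#T : ℝ) * L / ↑n) + 2 * C * (#T : ℝ) * L / ↑n := by
    rw [hsqrtTL]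
    have hn1 : 0 ≤ Real.sqrt (#T : ℝ) * Real.sqrt (L / ↑n) := by positivity
    have hn2 : 0 ≤ (#T : ℝ) * (L / ↑n) := by positivity
    have h1 : C * (Real.sqrt 3 * (Real.sqrt (#T : ℝ) * Real.sqrt (L / ↑n)))
        ≤ C * ((Real.sqrt 2 + 1) * (Real.sqrt (#T : ℝ) * Real.sqrt (L / ↑n))) := by
      apply mul_le_mul_of_nonneg_left _ hC0
      exact mul_le_mul_of_nonneg_right hsqrt23 hn1
    have h2 : C * ((#T : ℝ) * (L / ↑n)) ≤ 2 * C * (#T : ℝ) * L / ↑n := by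
      have : 2 * C * (#T : ℝ) * L / ↑n = 2 * (C * ((#T : ℝ) * (L / ↑n))) := by ring
      rw [this]
      nlinarith [mul_nonneg hC0 hn2]
    nlinarith [h1, h2]
  calc ∫ z, f z ∂P = ∑ i : Fin K, ∫ z in Zpart i, f z ∂P := hsplit
    _ ≤ ∑ i ∈ T, (q i * (empLossIn f S (Zpart i) + epsSup f S (Zpart i))
          + max (p i - q i) 0 * C) + ∑ i ∈ Tᶜ, p i * C := hmain
    _ = (∑ i ∈ T, q i * empLossIn f S (Zpart i)) + (∑ i ∈ T, q i * epsSup f S (Zpart i))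
          + C * ((∑ i ∈ T, max (p i - q i) 0) + ∑ i ∈ Tᶜ, p i) := by
        have e1 : ∀ i ∈ T, q i * (empLossIn f S (Zpart i) + epsSup f S (Zpart i))
            + max (p i - q i) 0 * C
            = q i * empLossIn f S (Zpart i) + q i * epsSup f S (Zpart i)
              + C * max (p i - q i) 0 := fun i _ => by ring
        rw [Finset.sum_congr rfl e1, Finset.sum_add_distrib, Finset.sum_add_distrib,
          ← Finset.mul_sum]
        have e2 : ∑ i ∈ Tᶜ, p i * C = C * ∑ i ∈ Tᶜ, p i := by
          rw [Finset.mul_sum]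
          exact Finset.sum_congr rfl fun i _ => by ring
        rw [e2]
        ring
    _ = empLoss f S + (∑ i ∈ T, q i * epsSup f S (Zpart i))
          + C * ∑ i ∈ T, max (q i - p i) 0 := by rw [hemp, hid]
    _ ≤ empLoss f S + (∑ i ∈ T, q i * epsSup f S (Zpart i))
          + (C * (Real.sqrt 2 + 1) * Real.sqrt ((#T : ℝ) * L / ↑n)
             + 2 * C * (#T : ℝ) * L / ↑n) := by
        have := mul_le_mul_of_nonneg_left hstep1 hC0
        linarith [hconst]
    _ ≤ _ := by
        simp only [hqdef]
        linarith

/-- Local Robustness generalization bound. -/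
theorem statement5 {Z : Type*} [MeasurableSpace Z] (P : Measure Z) [IsProbabilityMeasure P]
    {K : ℕ} (Zpart : Fin K → Set Z)
    (hZmeas : ∀ i, MeasurableSet (Zpart i))
    (hZdisj : ∀ i j, i ≠ j → Disjoint (Zpart i) (Zpart j))
    (hZcover : (⋃ i, Zpart i) = Set.univ)
    (hZpos : ∀ i, 0 < P (Zpart i))
    {n : ℕ} (hn : 0 < n)
    (ℓ : (Fin n → Z) → Z → ℝ)
    (hℓmeas : ∀ S, Measurable (ℓ S))
    (hℓnonneg : ∀ S z, 0 ≤ ℓ S z)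
    (hℓbdd : ∀ S, BddAbove (Set.range (ℓ S)))
    (δ : ℝ) (hδ : 0 < δ) :
    ENNReal.ofReal (1 - δ) ≤
      (Measure.pi fun _ : Fin n => P)
        {S | ∫ z, ℓ S z ∂P ≤
          (⨆ z, ℓ S z) * (Real.sqrt 2 + 1) *
              Real.sqrt (((Tset S Zpart).card : ℝ) * Real.log (2 * K / δ) / n)
            + 2 * (⨆ z, ℓ S z) * ((Tset S Zpart).card : ℝ) * Real.log (2 * K / δ) / n
            + empLoss (ℓ S) S
            + ∑ i ∈ Tset S Zpart, ((cnt S (Zpart i) : ℝ) / n) * epsSup (ℓ S) S (Zpart i)} := by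
  classical
  set μ := Measure.pi fun _ : Fin n => P with hμ
  rcases le_or_gt 1 δ with h1 | h1
  · have : ENNReal.ofReal (1 - δ) = 0 := by
      rw [ENNReal.ofReal_eq_zero]
      linarith
    rw [this]
    exact zero_le
  have hZne : Nonempty Z := by
    by_contra h
    have huniv : (Set.univ : Set Z) = ∅ := Set.univ_eq_empty_iff.mpr (not_nonempty_iff.mp h)
    have := measure_univ (μ := P)
    rw [huniv, measure_empty] at this
    exact one_ne_zero this.symm
  have hK : 0 < K := by
    rcases Nat.eq_zero_or_pos K with hK0 | hK0
    · exfalso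
      obtain ⟨z⟩ := hZne
      have : z ∈ ⋃ i, Zpart i := by rw [hZcover]; trivial
      obtain ⟨i, -⟩ := Set.mem_iUnion.mp this
      subst hK0
      exact i.elim0
    · exact hK0
  have hK1 : (1:ℝ) ≤ K := by exact_mod_cast hK
  set L := Real.log (2 * K / δ) with hLdef
  have hLpos : 0 < L := by
    apply Real.log_pos
    rw [lt_div_iff₀ hδ]
    nlinarith
  have hexp : Real.exp (-L) = δ / (2 * K) := by
    rw [hLdef, Real.exp_neg, Real.exp_log (by positivity), inv_div]
  set Bad := fun i : Fin K =>
    {S : Fin n → Z | (n : ℝ) * (P (Zpart i)).toReal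
      + (Real.sqrt (3 * n * (P (Zpart i)).toReal * L) + L) ≤ (cnt S (Zpart i) : ℝ)} with hBadDef
  have hBadMeas : ∀ i, MeasurableSet (Bad i) := fun i =>
    measurableSet_le measurable_const (measurable_cnt _ (hZmeas i))
  have hBad : ∀ i, μ (Bad i) ≤ ENNReal.ofReal (δ / (2 * K)) := by
    intro i
    rw [← hexp]
    exact cnt_tail P hn (Zpart i) (hZmeas i) hLpos
      (ENNReal.toReal_pos (hZpos i).ne' (measure_ne_top _ _))
  have hUnion : μ (⋃ i, Bad i) ≤ ENNReal.ofReal δ := by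
    calc μ (⋃ i, Bad i) ≤ ∑' i, μ (Bad i) := measure_iUnion_le _
      _ = ∑ i : Fin K, μ (Bad i) := tsum_fintype _
      _ ≤ ∑ _i : Fin K, ENNReal.ofReal (δ / (2 * K)) := Finset.sum_le_sum fun i _ => hBad i
      _ = (K : ℝ≥0∞) * ENNReal.ofReal (δ / (2 * K)) := by
          rw [Finset.sum_const, Finset.card_univ, Fintype.card_fin, nsmul_eq_mul]
      _ = ENNReal.ofReal ((K : ℝ) * (δ / (2 * K))) := by
          rw [ENNReal.ofReal_mul (Nat.cast_nonneg K), ENNReal.ofReal_natCast]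
      _ ≤ ENNReal.ofReal δ := by
          apply ENNReal.ofReal_le_ofReal
          have hKne : (K:ℝ) ≠ 0 := by positivity
          rw [show (K : ℝ) * (δ / (2 * K)) = δ / 2 by field_simp]
          linarith
  have hsub : (⋃ i, Bad i)ᶜ ⊆ {S : Fin n → Z | ∫ z, ℓ S z ∂P ≤
      (⨆ z, ℓ S z) * (Real.sqrt 2 + 1) *
          Real.sqrt (((Tset S Zpart).card : ℝ) * Real.log (2 * K / δ) / n)
        + 2 * (⨆ z, ℓ S z) * ((Tset S Zpart).card : ℝ) * Real.log (2 * K / δ) / n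
        + empLoss (ℓ S) S
        + ∑ i ∈ Tset S Zpart, ((cnt S (Zpart i) : ℝ) / n) * epsSup (ℓ S) S (Zpart i)} := by
    intro S hS
    rw [Set.mem_compl_iff, Set.mem_iUnion] at hS
    push_neg at hS
    have hgood : ∀ i, (cnt S (Zpart i) : ℝ)
        ≤ n * (P (Zpart i)).toReal + (Real.sqrt (3 * n * (P (Zpart i)).toReal * L) + L) := by
      intro i
      have := hS i
      rw [hBadDef] at this
      simp only [Set.mem_setOf_eq, not_le] at this
      exact this.le
    exact deterministic P hZne Zpart hZmeas hZdisj hZcover hn (ℓ S) (hℓmeas S)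
      (hℓnonneg S) (hℓbdd S) S hLpos hgood
  haveI : IsProbabilityMeasure μ := by rw [hμ]; infer_instance
  have hcompl : μ ((⋃ i, Bad i)ᶜ) = 1 - μ (⋃ i, Bad i) := by
    rw [measure_compl (MeasurableSet.iUnion hBadMeas) (measure_ne_top _ _), measure_univ]
  calc ENNReal.ofReal (1 - δ) = 1 - ENNReal.ofReal δ := by
        rw [ENNReal.ofReal_sub 1 hδ.le, ENNReal.ofReal_one]
    _ ≤ 1 - μ (⋃ i, Bad i) := tsub_le_tsub_left hUnion 1
    _ = μ ((⋃ i, Bad i)ᶜ) := hcompl.symm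
    _ ≤ _ := measure_mono hsub
end

section
/- (Lower bound for a model family.) Let \pi be a probability measure on a measurable space H of models with a jointly measurable, bounded, nonnegative loss \ell : H \times Z \to \mathbb{R}. Set \bar{a}_i = E_{h \sim \pi}[a_i(h)] for each i \in [K], \hat{a} = \max_{j \in [K]} \bar{a}_j, and \beta = 2 \sum_{j=1}^{K} P(Z_j) \bar{a}_j^2. If \beta > 0, then for every \delta \ge \exp(-n\beta/(2\hat{a}^2)), with probability at least 1 - \delta over n i.i.d. samples S from P: E_{h \sim \pi}[F(P,h)] \ge \left( \sqrt{ \sum_{i \in T_S} (n_i/n) \bar{a}_i + \hat{a} \ln(1/\delta)/n } - \sqrt{ \hat{a} \ln(1/\delta)/n } \right)^2. -/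
open MeasureTheory Finset
open scoped ENNReal

lemma my_integral_affine {α : Type*} [MeasurableSpace α] (μ : Measure α) [IsProbabilityMeasure μ]
    {g1 g2 : α → ℝ} (h1 : Integrable g1 μ) (h2 : Integrable g2 μ) (a b : ℝ) :
    ∫ x, (1 + a * g1 x + b * g2 x) ∂μ = 1 + a * ∫ x, g1 x ∂μ + b * ∫ x, g2 x ∂μ := by
  have i1 : Integrable (fun x => a * g1 x) μ := h1.const_mul a
  have i2 : Integrable (fun x => b * g2 x) μ := h2.const_mul b
  have i01 : Integrable (fun x => 1 + a * g1 x) μ := (integrable_const 1).add i1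
  rw [integral_add i01 i2, integral_add (integrable_const 1) i1, integral_const,
    integral_const_mul, integral_const_mul]
  simp

lemma my_case1 {a q V L : ℝ} (ha : 0 < a) (hV : 0 < V) (hL2 : L * a ^ 2 ≤ V) (h3 : V ≤ q * a) :
    L ≤ 1 / a * (2 * q) - (1 / a) ^ 2 * V := by
  have he : 1 / a * (2 * q) - (1 / a) ^ 2 * V = (2 * q * a - V) / a ^ 2 := by field_simp
  rw [he, le_div_iff₀ (by positivity)]
  nlinarith

lemma my_case2 {q V L mb : ℝ} (hV : 0 < V) (hq2 : q ^ 2 = mb * L) (hL : 0 ≤ L) (hmb : V ≤ mb) :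
    L ≤ q / V * (2 * q) - (q / V) ^ 2 * V := by
  have he : q / V * (2 * q) - (q / V) ^ 2 * V = q ^ 2 / V := by field_simp; ring
  rw [he, hq2, le_div_iff₀ hV]
  nlinarith

lemma my_exp_quad {x : ℝ} (h0 : 0 ≤ x) (h1 : x ≤ 1) : Real.exp x ≤ 1 + x + x ^ 2 := by
  have := Real.exp_bound' h0 h1 (n := 2) (by norm_num)
  simp [Finset.sum_range_succ] at this
  nlinarith

lemma my_pi_pow {Z : Type*} [MeasurableSpace Z] (P : Measure Z) [IsProbabilityMeasure P]
    (n : ℕ) (g : Z → ℝ) :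
    ∫ S : Fin n → Z, ∏ j, g (S j) ∂(Measure.pi fun _ : Fin n => P) = (∫ z, g z ∂P) ^ n := by
  letI : MeasureSpace Z := ⟨P⟩
  haveI : IsProbabilityMeasure (volume : Measure Z) := ‹IsProbabilityMeasure P›
  have h := MeasureTheory.integral_fintype_prod_eq_pow (ι := Fin n) g (μ := P)
  simpa [MeasureTheory.volume_pi] using h

set_option maxHeartbeats 4000000 in
/-- Lower bound for the average error of a model family. -/
theorem statement9 {Z : Type*} [MeasurableSpace Z] (P : Measure Z) [IsProbabilityMeasure P]
    {K : ℕ} (Zpart : Fin K → Set Z)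
    (hZmeas : ∀ i, MeasurableSet (Zpart i))
    (hZdisj : ∀ i j, i ≠ j → Disjoint (Zpart i) (Zpart j))
    (hZcover : (⋃ i, Zpart i) = Set.univ)
    (hZpos : ∀ i, 0 < P (Zpart i))
    {H : Type*} [MeasurableSpace H] (π : Measure H) [IsProbabilityMeasure π]
    (ℓ : H → Z → ℝ) (hℓmeas : Measurable (Function.uncurry ℓ))
    (hℓnonneg : ∀ h z, 0 ≤ ℓ h z) (hℓbdd : ∃ C, ∀ h z, ℓ h z ≤ C)
    {n : ℕ} (hn : 0 < n)
    (abar : Fin K → ℝ) (habar : ∀ i, abar i = ∫ h, condAvg P (ℓ h) (Zpart i) ∂π)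
    (ahat : ℝ) (hahat : IsGreatest (Set.range abar) ahat)
    (β : ℝ) (hβdef : β = 2 * ∑ j, (P (Zpart j)).toReal * abar j ^ 2) (hβ : 0 < β)
    (δ : ℝ) (hδ : Real.exp (-((n : ℝ) * β) / (2 * ahat ^ 2)) ≤ δ) :
    ENNReal.ofReal (1 - δ) ≤
      (Measure.pi fun _ : Fin n => P)
        {S | (Real.sqrt (∑ i ∈ Tset S Zpart, ((cnt S (Zpart i) : ℝ) / n) * abar i
                  + ahat * Real.log (1 / δ) / n)
              - Real.sqrt (ahat * Real.log (1 / δ) / n)) ^ 2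
            ≤ ∫ h, ∫ z, ℓ h z ∂P ∂π} := by
  classical
  set Pn := Measure.pi fun _ : Fin n => P with hPn
  haveI : IsProbabilityMeasure Pn := by rw [hPn]; infer_instance
  rcases le_or_gt 1 δ with hδ1 | hδ1
  · have h0 : ENNReal.ofReal (1 - δ) = 0 := by
      rw [ENNReal.ofReal_eq_zero]; linarith
    rw [h0]; exact bot_le
  have hδ0 : 0 < δ := lt_of_lt_of_le (Real.exp_pos _) hδ
  have hnR : (0 : ℝ) < n := by exact_mod_cast hn
  -- basic positivity facts
  have hPt : ∀ i, 0 < (P (Zpart i)).toReal := fun i =>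
    ENNReal.toReal_pos (hZpos i).ne' (measure_ne_top P _)
  have hPt1 : ∀ i, (P (Zpart i)).toReal ≤ 1 := fun i => by
    have h : P (Zpart i) ≤ P Set.univ := measure_mono (Set.subset_univ _)
    have h2 := ENNReal.toReal_mono (measure_ne_top P _) h
    simpa using h2
  have habar_nonneg : ∀ i, 0 ≤ abar i := by
    intro i
    rw [habar i]
    apply integral_nonneg
    intro h
    exact div_nonneg (integral_nonneg fun z => hℓnonneg h z) ENNReal.toReal_nonneg
  have habar_le : ∀ i, abar i ≤ ahat := fun i => hahat.2 ⟨i, rfl⟩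
  set m : ℝ := ∑ i, (P (Zpart i)).toReal * abar i with hm
  set V : ℝ := ∑ i, (P (Zpart i)).toReal * abar i ^ 2 with hV
  have hVpos : 0 < V := by rw [hβdef] at hβ; linarith
  have hb : 0 < ahat := by
    by_contra hcon
    push_neg at hcon
    have : V ≤ 0 := by
      apply Finset.sum_nonpos
      intro i _
      have h1 : abar i = 0 := le_antisymm (le_trans (habar_le i) hcon) (habar_nonneg i)
      simp [h1]
    linarith
  have hVbm : V ≤ ahat * m := by
    rw [hV, hm, Finset.mul_sum]
    apply Finset.sum_le_sum
    intro i _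
    have : abar i ^ 2 ≤ ahat * abar i := by nlinarith [habar_le i, habar_nonneg i]
    nlinarith [(hPt i).le]
  have hmpos : 0 < m := by nlinarith
  set L : ℝ := Real.log (1 / δ) / n with hLdef
  have hlog : 0 < Real.log (1 / δ) := Real.log_pos (by rw [lt_div_iff₀ hδ0]; linarith)
  have hL0 : 0 < L := div_pos hlog hnR
  have hLle : L ≤ V / ahat ^ 2 := by
    have h1 : -((n : ℝ) * β / (2 * ahat ^ 2)) ≤ Real.log δ := by
      rw [← neg_div]; exact (Real.le_log_iff_exp_le hδ0).mpr hδ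
    have h2 : Real.log (1 / δ) ≤ (n : ℝ) * β / (2 * ahat ^ 2) := by
      rw [one_div, Real.log_inv]; linarith
    rw [hβdef, le_div_iff₀ (by positivity : (0:ℝ) < 2 * ahat ^ 2)] at h2
    rw [hLdef, div_le_div_iff₀ hnR (by positivity : (0:ℝ) < ahat ^ 2)]
    nlinarith
  set c : ℝ := ahat * Real.log (1 / δ) / n with hcdef
  have hcL : c = ahat * L := by rw [hcdef, hLdef]; ring
  have hc0 : 0 < c := by rw [hcL]; positivity
  -- the region-average function
  set f : Z → ℝ := fun z => ∑ i, (Zpart i).indicator (fun _ => abar i) z with hf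
  have hfmeas : Measurable f := by
    apply Finset.measurable_sum
    intro i _
    exact measurable_const.indicator (hZmeas i)
  have hf_eq : ∀ z, ∃ i, z ∈ Zpart i ∧ f z = abar i := by
    intro z
    have hz : z ∈ ⋃ i, Zpart i := by rw [hZcover]; trivial
    obtain ⟨i, hi⟩ := Set.mem_iUnion.mp hz
    refine ⟨i, hi, ?_⟩
    show (∑ k, (Zpart k).indicator (fun _ => abar k) z) = abar i
    rw [Finset.sum_eq_single i]
    · simp [Set.indicator_of_mem hi]
    · intro j _ hj
      exact Set.indicator_of_notMem (fun hzj => Set.disjoint_left.mp (hZdisj j i hj) hzj hi) _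
    · simp
  have hf0 : ∀ z, 0 ≤ f z := by
    intro z; obtain ⟨i, _, he⟩ := hf_eq z; rw [he]; exact habar_nonneg i
  have hfb : ∀ z, f z ≤ ahat := by
    intro z; obtain ⟨i, _, he⟩ := hf_eq z; rw [he]; exact habar_le i
  have hfsq : ∀ z, f z ^ 2 = ∑ i, (Zpart i).indicator (fun _ => abar i ^ 2) z := by
    intro z
    obtain ⟨i, hi, he⟩ := hf_eq z
    rw [he, Finset.sum_eq_single i]
    · simp [Set.indicator_of_mem hi]
    · intro j _ hj
      exact Set.indicator_of_notMem (fun hzj => Set.disjoint_left.mp (hZdisj j i hj) hzj hi) _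
    · simp
  -- integrals of f
  have hfint : Integrable f P := by
    apply Integrable.mono' (integrable_const ahat) hfmeas.aestronglyMeasurable
    exact ae_of_all _ fun z => by rw [Real.norm_eq_abs, abs_of_nonneg (hf0 z)]; exact hfb z
  have h_int_f : ∫ z, f z ∂P = m := by
    rw [hf, integral_finset_sum _ (fun i _ => (integrable_const (abar i)).indicator (hZmeas i))]
    rw [hm]
    congr 1
    funext i
    rw [integral_indicator_const _ (hZmeas i)]
    simp [mul_comm, measureReal_def]
  have h_int_f2 : ∫ z, f z ^ 2 ∂P = V := by
    rw [integral_congr_ae (ae_of_all _ hfsq)]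
    rw [integral_finset_sum _ (fun i _ => (integrable_const (abar i ^ 2)).indicator (hZmeas i))]
    rw [hV]
    congr 1
    funext i
    rw [integral_indicator_const _ (hZmeas i)]
    simp [mul_comm, measureReal_def]
  have hf2int : Integrable (fun z => f z ^ 2) P := by
    apply Integrable.mono' (integrable_const (ahat ^ 2)) (hfmeas.pow_const 2).aestronglyMeasurable
    exact ae_of_all _ fun z => by
      rw [Real.norm_eq_abs, abs_of_nonneg (by positivity)]
      nlinarith [hf0 z, hfb z]
  -- mean identity
  obtain ⟨C₀, hC₀⟩ := hℓbdd
  set C : ℝ := max C₀ 0 with hCdef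
  have hC : ∀ h z, ℓ h z ≤ C := fun h z => le_trans (hC₀ h z) (le_max_left _ _)
  have hCpos : 0 ≤ C := le_max_right _ _
  have hℓm : ∀ h, Measurable (ℓ h) := fun h => hℓmeas.comp measurable_prodMk_left
  have hℓint : ∀ h, Integrable (ℓ h) P := fun h => by
    apply Integrable.mono' (integrable_const C) (hℓm h).aestronglyMeasurable
    exact ae_of_all _ fun z => by
      rw [Real.norm_eq_abs, abs_of_nonneg (hℓnonneg h z)]; exact hC h z
  have hmean : ∫ h, ∫ z, ℓ h z ∂P ∂π = m := by
    have step1 : ∀ h, ∫ z, ℓ h z ∂P = ∑ i, ∫ z in Zpart i, ℓ h z ∂P := by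
      intro h
      have h1 : ∫ z, ℓ h z ∂P = ∫ z in ⋃ i, Zpart i, ℓ h z ∂P := by
        rw [hZcover, Measure.restrict_univ]
      rw [h1, integral_iUnion hZmeas (fun i j hij => hZdisj i j hij)
        ((hℓint h).integrableOn)]
      exact tsum_fintype _
    have hgmeas : ∀ i, StronglyMeasurable (fun h => ∫ z in Zpart i, ℓ h z ∂P) := fun i =>
      hℓmeas.stronglyMeasurable.integral_prod_right'
    have hgbd : ∀ i h, |∫ z in Zpart i, ℓ h z ∂P| ≤ C := by
      intro i h
      have h0 : 0 ≤ ∫ z in Zpart i, ℓ h z ∂P :=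
        setIntegral_nonneg (hZmeas i) fun z _ => hℓnonneg h z
      have h1 : ∫ z in Zpart i, ℓ h z ∂P ≤ ∫ z in Zpart i, C ∂P :=
        setIntegral_mono_on (hℓint h).integrableOn (integrable_const C).integrableOn
          (hZmeas i) (fun z _ => hC h z)
      rw [setIntegral_const, smul_eq_mul] at h1
      rw [abs_of_nonneg h0]
      calc ∫ z in Zpart i, ℓ h z ∂P ≤ (P (Zpart i)).toReal * C := h1
        _ ≤ 1 * C := by nlinarith [hPt1 i]
        _ = C := one_mul C
    have hgint : ∀ i, Integrable (fun h => ∫ z in Zpart i, ℓ h z ∂P) π := fun i => by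
      apply Integrable.mono' (integrable_const C) (hgmeas i).aestronglyMeasurable
      exact ae_of_all _ fun h => by rw [Real.norm_eq_abs]; exact hgbd i h
    calc ∫ h, ∫ z, ℓ h z ∂P ∂π = ∫ h, ∑ i, ∫ z in Zpart i, ℓ h z ∂P ∂π :=
          integral_congr_ae (ae_of_all _ step1)
      _ = ∑ i, ∫ h, (∫ z in Zpart i, ℓ h z ∂P) ∂π :=
          integral_finset_sum _ (fun i _ => hgint i)
      _ = m := by
          rw [hm]
          apply Finset.sum_congr rfl
          intro i _
          have h1 : abar i = (∫ h, (∫ z in Zpart i, ℓ h z ∂P) ∂π) / (P (Zpart i)).toReal := by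
            rw [habar i]
            simp only [condAvg]
            rw [integral_div]
          rw [h1]
          rw [mul_comm, div_mul_cancel₀ _ (hPt i).ne']
  -- sample-sum identity
  have hTsum : ∀ S : Fin n → Z,
      ∑ i ∈ Tset S Zpart, ((cnt S (Zpart i) : ℝ) / n) * abar i = (∑ j, f (S j)) / n := by
    intro S
    have h1 : ∑ j, f (S j) = ∑ i, (cnt S (Zpart i) : ℝ) * abar i := by
      simp only [hf]
      rw [Finset.sum_comm]
      apply Finset.sum_congr rfl
      intro i _
      have he : ∀ j : Fin n, (Zpart i).indicator (fun _ => abar i) (S j)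
          = if S j ∈ Zpart i then abar i else 0 := fun j => Set.indicator_apply _ _ _
      simp_rw [he]
      rw [← Finset.sum_filter, Finset.sum_const, cnt]
      simp [nsmul_eq_mul]
    have h2 : ∑ i ∈ Tset S Zpart, ((cnt S (Zpart i) : ℝ) / n) * abar i
        = ∑ i : Fin K, ((cnt S (Zpart i) : ℝ) / n) * abar i := by
      apply Finset.sum_subset (Finset.subset_univ _)
      intro i _ hi
      have hz : cnt S (Zpart i) = 0 := by
        by_contra hne
        exact hi (by simp [Tset, Nat.pos_of_ne_zero hne])
      simp [hz]
    rw [h2, h1, Finset.sum_div]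
    apply Finset.sum_congr rfl
    intro i _
    ring
  -- Chernoff bound
  set u : ℝ := m + 2 * Real.sqrt (m * c) with hu
  set X : (Fin n → Z) → ℝ := fun S => ∑ j, f (S j) with hX
  -- choice of the Chernoff parameter
  set q : ℝ := Real.sqrt (m * c) with hq
  have hq2 : q ^ 2 = m * c := Real.sq_sqrt (by positivity)
  have hq0 : 0 < q := Real.sqrt_pos.mpr (by positivity)
  set s0 : ℝ := min (1 / ahat) (q / V) with hs0def
  have hs0 : 0 ≤ s0 := le_min (by positivity) (by positivity)
  have hsb : s0 * ahat ≤ 1 := by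
    have h1 : s0 ≤ 1 / ahat := min_le_left _ _
    rw [← le_div_iff₀ hb]
    exact h1
  have hkey : L ≤ s0 * (2 * q) - s0 ^ 2 * V := by
    have hmc : m * c = m * ahat * L := by rw [hcL]; ring
    have hL2 : L * ahat ^ 2 ≤ V := (le_div_iff₀ (by positivity)).mp hLle
    rcases min_cases (1 / ahat) (q / V) with ⟨hs_eq, hle⟩ | ⟨hs_eq, hlt⟩
    · -- s0 = 1/ahat
      have h3 : V ≤ q * ahat := by
        have := (div_le_div_iff₀ hb hVpos).mp hle
        linarith
      rw [hs0def, hs_eq]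
      exact my_case1 hb hVpos hL2 h3
    · -- s0 = q/V
      rw [hs0def, hs_eq]
      have hq2' : q ^ 2 = ahat * m * L := by rw [hq2, hmc]; ring
      exact my_case2 hVpos hq2' hL0.le hVbm
  -- mgf bound for a single sample
  have hint_exp : Integrable (fun z => Real.exp (s0 * f z)) P := by
    apply Integrable.mono' (integrable_const (Real.exp (s0 * ahat)))
      (Real.measurable_exp.comp (hfmeas.const_mul s0)).aestronglyMeasurable
    refine ae_of_all _ fun z => ?_
    have hz : Real.exp (s0 * f z) ≤ Real.exp (s0 * ahat) :=
      Real.exp_le_exp.mpr (mul_le_mul_of_nonneg_left (hfb z) hs0)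
    simpa [Real.norm_eq_abs, abs_of_nonneg (Real.exp_pos (s0 * f z)).le] using hz
  have hmgf1 : ∫ z, Real.exp (s0 * f z) ∂P ≤ Real.exp (s0 * m + s0 ^ 2 * V) := by
    have h1p : ∀ z, Real.exp (s0 * f z) ≤ 1 + s0 * f z + s0 ^ 2 * f z ^ 2 := by
      intro z
      have h0 : 0 ≤ s0 * f z := mul_nonneg hs0 (hf0 z)
      have h1 : s0 * f z ≤ 1 :=
        le_trans (mul_le_mul_of_nonneg_left (hfb z) hs0) hsb
      have := my_exp_quad h0 h1
      calc Real.exp (s0 * f z) ≤ 1 + s0 * f z + (s0 * f z) ^ 2 := this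
        _ = 1 + s0 * f z + s0 ^ 2 * f z ^ 2 := by ring
    have hint2 : Integrable (fun z => 1 + s0 * f z + s0 ^ 2 * f z ^ 2) P := by
      exact ((integrable_const (1 : ℝ)).add (hfint.const_mul s0)).add (hf2int.const_mul (s0 ^ 2))
    have h2 : ∫ z, Real.exp (s0 * f z) ∂P ≤ ∫ z, (1 + s0 * f z + s0 ^ 2 * f z ^ 2) ∂P :=
      integral_mono hint_exp hint2 h1p
    have h3 : ∫ z, (1 + s0 * f z + s0 ^ 2 * f z ^ 2) ∂P = 1 + s0 * m + s0 ^ 2 * V := by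
      rw [my_integral_affine P hfint hf2int s0 (s0 ^ 2), h_int_f, h_int_f2]
    have h4 : 1 + s0 * m + s0 ^ 2 * V ≤ Real.exp (s0 * m + s0 ^ 2 * V) := by
      have := Real.add_one_le_exp (s0 * m + s0 ^ 2 * V)
      linarith
    linarith
  -- mgf of the sum over the product measure
  have hXmeas : Measurable X :=
    Finset.measurable_sum _ fun j _ => hfmeas.comp (measurable_pi_apply j)
  have hXle : ∀ S, X S ≤ (n : ℝ) * ahat := by
    intro S
    rw [hX]
    calc ∑ j, f (S j) ≤ ∑ _j : Fin n, ahat := Finset.sum_le_sum fun j _ => hfb _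
      _ = (n : ℝ) * ahat := by rw [Finset.sum_const]; simp [nsmul_eq_mul]
  have hXint : Integrable (fun S => Real.exp (s0 * X S)) Pn := by
    apply Integrable.mono' (integrable_const (Real.exp (s0 * ((n : ℝ) * ahat))))
      (Real.measurable_exp.comp (hXmeas.const_mul s0)).aestronglyMeasurable
    refine ae_of_all _ fun S => ?_
    have hz : Real.exp (s0 * X S) ≤ Real.exp (s0 * ((n : ℝ) * ahat)) :=
      Real.exp_le_exp.mpr (mul_le_mul_of_nonneg_left (hXle S) hs0)
    simpa [Real.norm_eq_abs, abs_of_nonneg (Real.exp_pos (s0 * X S)).le] using hz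
  have hprod : ∫ S, Real.exp (s0 * X S) ∂Pn = (∫ z, Real.exp (s0 * f z) ∂P) ^ n := by
    have he : ∀ S : Fin n → Z, Real.exp (s0 * X S) = ∏ j, Real.exp (s0 * f (S j)) := by
      intro S
      rw [← Real.exp_sum]
      congr 1
      rw [hX, Finset.mul_sum]
    calc ∫ S, Real.exp (s0 * X S) ∂Pn = ∫ S, ∏ j, Real.exp (s0 * f (S j)) ∂Pn :=
          integral_congr_ae (ae_of_all _ he)
      _ = _ := by rw [hPn]; exact my_pi_pow P n (fun z => Real.exp (s0 * f z))
  -- Chernoff bound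
  have hmark := ProbabilityTheory.measure_ge_le_exp_mul_mgf (X := X) (μ := Pn) (t := s0)
    ((n : ℝ) * u) hs0 hXint
  have hnL : (n : ℝ) * L = Real.log (1 / δ) := by
    rw [hLdef, mul_div_cancel₀ _ hnR.ne']
  have hfinal : Real.exp (-s0 * ((n : ℝ) * u)) * ProbabilityTheory.mgf X Pn s0 ≤ δ := by
    have e1 : ProbabilityTheory.mgf X Pn s0 = (∫ z, Real.exp (s0 * f z) ∂P) ^ n := hprod
    rw [e1]
    have e2 : (∫ z, Real.exp (s0 * f z) ∂P) ^ n ≤ Real.exp (s0 * m + s0 ^ 2 * V) ^ n :=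
      pow_le_pow_left₀ (integral_nonneg fun z => (Real.exp_pos _).le) hmgf1 n
    have e3 : Real.exp (-s0 * ((n : ℝ) * u)) * Real.exp (s0 * m + s0 ^ 2 * V) ^ n
        = Real.exp ((n : ℝ) * (s0 * m + s0 ^ 2 * V - s0 * u)) := by
      rw [← Real.exp_nat_mul, ← Real.exp_add]
      congr 1
      ring
    have e4 : (n : ℝ) * (s0 * m + s0 ^ 2 * V - s0 * u) ≤ Real.log δ := by
      have e5 : s0 * m + s0 ^ 2 * V - s0 * u ≤ -L := by
        rw [hu]; nlinarith [hkey]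
      have e6 : Real.log δ = -((n : ℝ) * L) := by
        rw [hnL, one_div, Real.log_inv]; ring
      rw [e6]
      nlinarith [hnR.le]
    calc Real.exp (-s0 * ((n : ℝ) * u)) * (∫ z, Real.exp (s0 * f z) ∂P) ^ n
        ≤ Real.exp (-s0 * ((n : ℝ) * u)) * Real.exp (s0 * m + s0 ^ 2 * V) ^ n := by
          apply mul_le_mul_of_nonneg_left e2 (Real.exp_pos _).le
      _ = Real.exp ((n : ℝ) * (s0 * m + s0 ^ 2 * V - s0 * u)) := e3
      _ ≤ Real.exp (Real.log δ) := Real.exp_le_exp.mpr e4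
      _ = δ := Real.exp_log hδ0
  have hchern : (Pn {S | (n : ℝ) * u ≤ X S}).toReal ≤ δ := le_trans hmark hfinal
  -- assemble
  set Bad : Set (Fin n → Z) := {S | (n : ℝ) * u ≤ X S} with hBadDef
  have hBad : Pn Bad ≤ ENNReal.ofReal δ := by
    rw [← ENNReal.ofReal_toReal (measure_ne_top Pn Bad)]
    exact ENNReal.ofReal_le_ofReal hchern
  have hsub : Badᶜ ⊆ {S | (Real.sqrt (∑ i ∈ Tset S Zpart, ((cnt S (Zpart i) : ℝ) / n) * abar i
                  + c) - Real.sqrt c) ^ 2 ≤ ∫ h, ∫ z, ℓ h z ∂P ∂π} := by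
    intro S hS
    simp only [hBadDef, Set.mem_compl_iff, Set.mem_setOf_eq, not_le] at hS
    rw [Set.mem_setOf_eq, hmean, hTsum S]
    have hA0 : 0 ≤ X S / n :=
      div_nonneg (Finset.sum_nonneg fun j _ => hf0 _) hnR.le
    have hAle : X S / n ≤ u := by
      rw [div_le_iff₀ hnR]
      nlinarith [hS]
    have h1 : X S / n + c ≤ (Real.sqrt m + Real.sqrt c) ^ 2 := by
      have he : (Real.sqrt m + Real.sqrt c) ^ 2
          = m + c + 2 * Real.sqrt (m * c) := by
        rw [add_sq, Real.sq_sqrt hmpos.le, Real.sq_sqrt hc0.le, Real.sqrt_mul hmpos.le]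
        ring
      rw [he]
      rw [hu] at hAle
      linarith
    have h2 : Real.sqrt (X S / n + c) ≤ Real.sqrt m + Real.sqrt c := by
      calc Real.sqrt (X S / n + c) ≤ Real.sqrt ((Real.sqrt m + Real.sqrt c) ^ 2) :=
            Real.sqrt_le_sqrt h1
        _ = Real.sqrt m + Real.sqrt c := Real.sqrt_sq (by positivity)
    have h3 : Real.sqrt c ≤ Real.sqrt (X S / n + c) :=
      Real.sqrt_le_sqrt (by linarith)
    have h4 : (Real.sqrt (X S / n + c) - Real.sqrt c) ^ 2 ≤ (Real.sqrt m) ^ 2 :=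
      pow_le_pow_left₀ (by linarith) (by linarith) 2
    rw [Real.sq_sqrt hmpos.le] at h4
    show (Real.sqrt (X S / n + c) - Real.sqrt c) ^ 2 ≤ m
    exact h4
  have hunion : (1 : ℝ≥0∞) ≤ Pn Badᶜ + Pn Bad := by
    calc (1 : ℝ≥0∞) = Pn Set.univ := measure_univ.symm
      _ = Pn (Badᶜ ∪ Bad) := by rw [Set.compl_union_self]
      _ ≤ Pn Badᶜ + Pn Bad := measure_union_le _ _
  have h5 : ENNReal.ofReal (1 - δ) + ENNReal.ofReal δ = 1 := by
    rw [← ENNReal.ofReal_add (by linarith) hδ0.le]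
    norm_num
  have h6 : (1 : ℝ≥0∞) ≤ Pn Badᶜ + ENNReal.ofReal δ :=
    le_trans hunion (add_le_add_right hBad _)
  have hgoal1 : ENNReal.ofReal (1 - δ) ≤ Pn Badᶜ := by
    rw [← h5] at h6
    exact (ENNReal.add_le_add_iff_right ENNReal.ofReal_ne_top).mp h6
  exact le_trans hgoal1 (measure_mono hsub)
end

section
/- (Lower bound for a fixed model.) Let h be a fixed model with bounded nonnegative measurable loss \ell_h. Set \hat{a} = \max_{j \in [K]} a_j(h) and \beta = 2 \sum_{j=1}^{K} P(Z_j) a_j(h)^2. If \beta > 0, then for every \delta \ge \exp(-n\beta/(2\hat{a}^2)), with probability at least 1 - \delta over n i.i.d. samples S from P: F(P,h) \ge \left( \sqrt{ \sum_{i \in T_S} (n_i/n) a_i(h) + \hat{a} \ln(1/\delta)/n } - \sqrt{ \hat{a} \ln(1/\delta)/n } \right)^2. -/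
open MeasureTheory Finset

lemma exp_le_quadratic {x : ℝ} (h1 : 0 ≤ x) (h2 : x ≤ 1) : Real.exp x ≤ 1 + x + x^2 := by
  have h := Real.exp_bound' h1 h2 (n := 2) (by norm_num)
  simp [Finset.sum_range_succ] at h
  nlinarith [sq_nonneg x]

lemma integrable_of_bdd {α : Type*} [MeasurableSpace α] {μ : Measure α} [IsFiniteMeasure μ]
    {f : α → ℝ} (hf : Measurable f) {C : ℝ} (h : ∀ x, |f x| ≤ C) : Integrable f μ :=
  Integrable.mono' (integrable_const C) hf.aestronglyMeasurable
    (Filter.Eventually.of_forall fun x => by rw [Real.norm_eq_abs]; exact h x)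


set_option maxHeartbeats 1000000 in
/-- Lower bound for the error of a fixed model. -/
theorem statement10 {Z : Type*} [MeasurableSpace Z] (P : Measure Z) [IsProbabilityMeasure P]
    {K : ℕ} (Zpart : Fin K → Set Z)
    (hZmeas : ∀ i, MeasurableSet (Zpart i))
    (hZdisj : ∀ i j, i ≠ j → Disjoint (Zpart i) (Zpart j))
    (hZcover : (⋃ i, Zpart i) = Set.univ)
    (hZpos : ∀ i, 0 < P (Zpart i))
    (ℓ : Z → ℝ) (hℓmeas : Measurable ℓ) (hℓnonneg : ∀ z, 0 ≤ ℓ z)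
    (hℓbdd : ∃ C, ∀ z, ℓ z ≤ C)
    {n : ℕ} (hn : 0 < n)
    (ahat : ℝ) (hahat : IsGreatest (Set.range fun j => condAvg P ℓ (Zpart j)) ahat)
    (β : ℝ) (hβdef : β = 2 * ∑ j, (P (Zpart j)).toReal * condAvg P ℓ (Zpart j) ^ 2) (hβ : 0 < β)
    (δ : ℝ) (hδ : Real.exp (-((n : ℝ) * β) / (2 * ahat ^ 2)) ≤ δ) :
    ENNReal.ofReal (1 - δ) ≤
      (Measure.pi fun _ : Fin n => P)
        {S | (Real.sqrt (∑ i ∈ Tset S Zpart, ((cnt S (Zpart i) : ℝ) / n) * condAvg P ℓ (Zpart i)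
                  + ahat * Real.log (1 / δ) / n)
              - Real.sqrt (ahat * Real.log (1 / δ) / n)) ^ 2
            ≤ ∫ z, ℓ z ∂P} := by
  classical
  rcases le_or_gt 1 δ with hδ1 | hδ1
  · have : ENNReal.ofReal (1 - δ) = 0 := ENNReal.ofReal_eq_zero.2 (by linarith)
    simp [this]
  have hδ0 : 0 < δ := lt_of_lt_of_le (Real.exp_pos _) hδ
  obtain ⟨C, hC⟩ := hℓbdd
  set a : Fin K → ℝ := fun i => condAvg P ℓ (Zpart i) with ha_def
  have ha_eq : ∀ i, condAvg P ℓ (Zpart i) = a i := fun i => rfl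
  simp only [ha_eq] at hβdef ⊢
  have hnR : (0:ℝ) < n := Nat.cast_pos.mpr hn
  have hPt : ∀ i, 0 < (P (Zpart i)).toReal :=
    fun i => ENNReal.toReal_pos (hZpos i).ne' (measure_ne_top _ _)
  have ha_nonneg : ∀ i, 0 ≤ a i := fun i =>
    div_nonneg (setIntegral_nonneg (hZmeas i) fun z _ => hℓnonneg z) ENNReal.toReal_nonneg
  have ha_le : ∀ i, a i ≤ ahat := fun i => hahat.2 ⟨i, rfl⟩
  -- uniqueness of partition membership
  have hmem : ∀ z : Z, ∃ i, z ∈ Zpart i := by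
    intro z
    have : z ∈ ⋃ i, Zpart i := hZcover ▸ Set.mem_univ z
    exact Set.mem_iUnion.mp this
  have huniq : ∀ z i j, z ∈ Zpart i → z ∈ Zpart j → i = j := by
    intro z i j hi hj
    by_contra hne
    exact Set.disjoint_left.mp (hZdisj i j hne) hi hj
  -- the function g
  set g : Z → ℝ := fun z => ∑ i, (Zpart i).indicator (fun _ => a i) z with hg_def
  have hg_eq : ∀ z i, z ∈ Zpart i → g z = a i := by
    intro z i hi
    simp only [hg_def]
    rw [Finset.sum_eq_single i]
    · exact Set.indicator_of_mem hi _
    · intro j _ hj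
      exact Set.indicator_of_notMem (fun hz => hj (huniq z j i hz hi)) _
    · intro h; exact absurd (Finset.mem_univ i) h
  have hg_meas : Measurable g :=
    Finset.measurable_sum _ fun i _ => measurable_const.indicator (hZmeas i)
  have hg_nonneg : ∀ z, 0 ≤ g z := by
    intro z; obtain ⟨i, hi⟩ := hmem z; rw [hg_eq z i hi]; exact ha_nonneg i
  have hg_le : ∀ z, g z ≤ ahat := by
    intro z; obtain ⟨i, hi⟩ := hmem z; rw [hg_eq z i hi]; exact ha_le i
  set m : ℝ := ∑ i, (P (Zpart i)).toReal * a i with hm_def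
  have hsetint : ∀ i, ∫ z in Zpart i, ℓ z ∂P = (P (Zpart i)).toReal * a i := by
    intro i
    show _ = _ * condAvg P ℓ (Zpart i)
    rw [condAvg, mul_comm, div_mul_cancel₀ _ (hPt i).ne']
  have hℓint : Integrable ℓ P := integrable_of_bdd hℓmeas (C := C)
    (fun z => by rw [abs_of_nonneg (hℓnonneg z)]; exact hC z)
  have hintℓ : ∫ z, ℓ z ∂P = m := by
    have hpt : ∀ z, ℓ z = ∑ i, (Zpart i).indicator ℓ z := by
      intro z
      obtain ⟨i, hi⟩ := hmem z
      rw [Finset.sum_eq_single i]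
      · exact (Set.indicator_of_mem hi _).symm
      · intro j _ hj
        exact Set.indicator_of_notMem (fun hz => hj (huniq z j i hz hi)) _
      · intro h; exact absurd (Finset.mem_univ i) h
    calc ∫ z, ℓ z ∂P = ∫ z, ∑ i, (Zpart i).indicator ℓ z ∂P := by
          exact integral_congr_ae (Filter.Eventually.of_forall hpt)
      _ = ∑ i, ∫ z, (Zpart i).indicator ℓ z ∂P :=
          integral_finset_sum _ (fun i _ => hℓint.indicator (hZmeas i))
      _ = ∑ i, ∫ z in Zpart i, ℓ z ∂P := by
          refine Finset.sum_congr rfl fun i _ => ?_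
          exact integral_indicator (hZmeas i)
      _ = m := by rw [hm_def]; exact Finset.sum_congr rfl fun i _ => hsetint i
  have hintg : ∫ z, g z ∂P = m := by
    rw [hg_def, hm_def]
    rw [integral_finset_sum _ (fun i _ => (integrable_const (a i)).indicator (hZmeas i))]
    refine Finset.sum_congr rfl fun i _ => ?_
    rw [integral_indicator_const _ (hZmeas i)]
    simp [mul_comm, Measure.real]
  -- positivity
  have haz : ∃ i, 0 < a i := by
    by_contra h
    push_neg at h
    have hz : ∀ i, a i = 0 := fun i => le_antisymm (h i) (ha_nonneg i)
    have hβ0 : β = 0 := by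
      rw [hβdef]
      simp [hz]
    linarith
  obtain ⟨i₀, hi₀⟩ := haz
  have hb_pos : 0 < ahat := lt_of_lt_of_le hi₀ (ha_le i₀)
  have hm_pos : 0 < m := by
    rw [hm_def]
    refine Finset.sum_pos' (fun i _ => mul_nonneg (hPt i).le (ha_nonneg i))
      ⟨i₀, Finset.mem_univ _, mul_pos (hPt i₀) hi₀⟩
  -- constants
  set L : ℝ := Real.log (1 / δ) with hL_def
  have hL_eq : L = -Real.log δ := by rw [hL_def, one_div, Real.log_inv]
  have hlogδ : Real.log δ < 0 := Real.log_neg hδ0 hδ1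
  have hL_pos : 0 < L := by rw [hL_eq]; linarith
  set c : ℝ := ahat * L / n with hc_def
  have hc_pos : 0 < c := div_pos (mul_pos hb_pos hL_pos) hnR
  have hLle : L ≤ (n:ℝ) * β / (2 * ahat ^ 2) := by
    have h := (Real.le_log_iff_exp_le hδ0).mpr hδ
    rw [hL_eq]
    have h' : -((n:ℝ) * β / (2 * ahat ^ 2)) ≤ Real.log δ := by
      rw [← neg_div]; exact h
    linarith
  have hsum_le : ∑ j, (P (Zpart j)).toReal * a j ^ 2 ≤ ahat * m := by
    rw [hm_def, Finset.mul_sum]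
    refine Finset.sum_le_sum fun i _ => ?_
    have h1 : a i ^ 2 ≤ ahat * a i := by nlinarith [ha_le i, ha_nonneg i]
    calc (P (Zpart i)).toReal * a i ^ 2 ≤ (P (Zpart i)).toReal * (ahat * a i) :=
          mul_le_mul_of_nonneg_left h1 (hPt i).le
      _ = ahat * ((P (Zpart i)).toReal * a i) := by ring
  have hc_le_m : c ≤ m := by
    have h2 : L * (2 * ahat ^ 2) ≤ (n:ℝ) * β := (le_div_iff₀ (by positivity)).mp hLle
    have h3 : β ≤ 2 * (ahat * m) := by rw [hβdef]; linarith [hsum_le]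
    rw [hc_def, div_le_iff₀ hnR]
    have h4 : (n:ℝ) * β ≤ (n:ℝ) * (2 * (ahat * m)) := mul_le_mul_of_nonneg_left h3 hnR.le
    nlinarith [hb_pos]
  set t : ℝ := Real.sqrt (c / m) / ahat with ht_def
  have htb : t * ahat = Real.sqrt (c / m) := div_mul_cancel₀ _ hb_pos.ne'
  have ht_pos : 0 < t := div_pos (Real.sqrt_pos.2 (div_pos hc_pos hm_pos)) hb_pos
  have htb_le : t * ahat ≤ 1 := by
    rw [htb]
    exact Real.sqrt_le_one.mpr ((div_le_one hm_pos).2 hc_le_m)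
  set s : ℝ := Real.sqrt (m * c) with hs_def
  have hs_pos : 0 < s := Real.sqrt_pos.2 (mul_pos hm_pos hc_pos)
  have hst : s * Real.sqrt (c / m) = c := by
    have h1 : (m * c) * (c / m) = c ^ 2 := by
      field_simp [hm_pos.ne']
    rw [hs_def, ← Real.sqrt_mul (mul_pos hm_pos hc_pos).le, h1, Real.sqrt_sq hc_pos.le]
  have hts : s * (t * ahat) = c := by rw [htb]; exact hst
  have hmt : m * t ^ 2 * ahat ^ 2 = c := by
    rw [ht_def, div_pow, Real.sq_sqrt (div_pos hc_pos hm_pos).le]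
    field_simp
  have hcL : (n:ℝ) * c = ahat * L := by rw [hc_def]; field_simp
  -- the single-sample mgf bound
  set E1 : ℝ := Real.exp (t * ahat) with hE1_def
  have hgint : Integrable g P := integrable_of_bdd hg_meas (C := ahat)
    (fun z => by rw [abs_of_nonneg (hg_nonneg z)]; exact hg_le z)
  have hpt_bound : ∀ z, Real.exp (t * g z) ≤ 1 + g z * ((E1 - 1) / ahat) := by
    intro z
    have hu0 : (0:ℝ) ≤ g z / ahat := div_nonneg (hg_nonneg z) hb_pos.le
    have hu1 : g z / ahat ≤ 1 := (div_le_one hb_pos).2 (hg_le z)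
    have hconv := convexOn_exp.2 (Set.mem_univ (0:ℝ)) (Set.mem_univ (t * ahat))
      (by linarith : (0:ℝ) ≤ 1 - g z / ahat) hu0 (by ring)
    simp only [smul_eq_mul] at hconv
    have harg : (1 - g z / ahat) * 0 + g z / ahat * (t * ahat) = t * g z := by
      field_simp; ring
    rw [harg, Real.exp_zero] at hconv
    have heq : (1 - g z / ahat) * 1 + g z / ahat * E1 = 1 + g z * ((E1 - 1) / ahat) := by
      field_simp; ring
    linarith [hconv]
  have hint_exp : Integrable (fun z => Real.exp (t * g z)) P :=
    integrable_of_bdd ((hg_meas.const_mul t).exp) (C := E1) (fun z => by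
      rw [abs_of_pos (Real.exp_pos _), hE1_def]
      exact Real.exp_le_exp.2 (by nlinarith [hg_le z, ht_pos.le]))
  set I : ℝ := ∫ z, Real.exp (t * g z) ∂P with hI_def
  have hI_nonneg : 0 ≤ I := integral_nonneg (fun z => (Real.exp_pos _).le)
  have hI_le : I ≤ Real.exp (m * ((E1 - 1) / ahat)) := by
    have hint_lin : Integrable (fun z => 1 + g z * ((E1 - 1) / ahat)) P :=
      (integrable_const 1).add (hgint.mul_const _)
    have h1 : I ≤ 1 + m * ((E1 - 1) / ahat) := by
      rw [hI_def]
      calc ∫ z, Real.exp (t * g z) ∂P ≤ ∫ z, (1 + g z * ((E1 - 1) / ahat)) ∂P :=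
            integral_mono hint_exp hint_lin hpt_bound
        _ = 1 + m * ((E1 - 1) / ahat) := by
            rw [integral_add (integrable_const 1) (hgint.mul_const _), integral_const,
              integral_mul_const, hintg]
            simp
    linarith [Real.add_one_le_exp (m * ((E1 - 1) / ahat))]
  -- product structure
  letI : MeasureSpace Z := { volume := P }
  haveI : IsProbabilityMeasure (volume : Measure Z) := ‹IsProbabilityMeasure P›
  set X : (Fin n → Z) → ℝ := fun S => ∑ j, g (S j) with hX_def
  have hXmeas : Measurable X :=
    Finset.measurable_sum _ fun j _ => hg_meas.comp (measurable_pi_apply j)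
  have hpi_eq : (Measure.pi fun _ : Fin n => P) = (volume : Measure (Fin n → Z)) :=
    volume_pi.symm
  have hmgf_prod : ∫ S, Real.exp (t * X S) ∂(Measure.pi fun _ : Fin n => P) = I ^ n := by
    rw [hpi_eq, hI_def]
    have hp : ∀ S : Fin n → Z, Real.exp (t * X S) = ∏ j, Real.exp (t * g (S j)) := by
      intro S
      rw [hX_def]
      rw [Finset.mul_sum, Real.exp_sum]
    simp_rw [hp]
    rw [← hpi_eq, MeasureTheory.integral_fintype_prod_eq_pow (ι := Fin n) (fun z => Real.exp (t * g z))]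
    simp only [Fintype.card_fin]
  haveI hpiprob : IsProbabilityMeasure (Measure.pi fun _ : Fin n => P) := by infer_instance
  have hXint : Integrable (fun S => Real.exp (t * X S)) (Measure.pi fun _ : Fin n => P) := by
    refine integrable_of_bdd ((hXmeas.const_mul t).exp) (C := Real.exp (t * ((n:ℝ) * ahat)))
      (fun S => ?_)
    rw [abs_of_pos (Real.exp_pos _)]
    apply Real.exp_le_exp.2
    apply mul_le_mul_of_nonneg_left _ ht_pos.le
    calc X S ≤ ∑ _j : Fin n, ahat := Finset.sum_le_sum (fun j _ => hg_le _)
      _ = (n:ℝ) * ahat := by simp [Finset.sum_const, nsmul_eq_mul]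
  have hε := ProbabilityTheory.measure_ge_le_exp_mul_mgf
    (μ := Measure.pi fun _ : Fin n => P) (X := X) ((n:ℝ) * (m + 2 * s)) ht_pos.le hXint
  have hmgf_eq : ProbabilityTheory.mgf X (Measure.pi fun _ : Fin n => P) t = I ^ n := by
    rw [ProbabilityTheory.mgf]
    exact hmgf_prod
  -- the numeric Chernoff bound
  have hnum : Real.exp (-t * ((n:ℝ) * (m + 2 * s))) * I ^ n ≤ δ := by
    have hIpow : I ^ n ≤ Real.exp ((n:ℝ) * (m * ((E1 - 1) / ahat))) := by
      calc I ^ n ≤ Real.exp (m * ((E1 - 1) / ahat)) ^ n := pow_le_pow_left₀ hI_nonneg hI_le n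
        _ = Real.exp ((n:ℝ) * (m * ((E1 - 1) / ahat))) := by
            rw [← Real.exp_nat_mul]
    have h2 : Real.exp (-t * ((n:ℝ) * (m + 2 * s))) * I ^ n
        ≤ Real.exp (-t * ((n:ℝ) * (m + 2 * s)) + (n:ℝ) * (m * ((E1 - 1) / ahat))) := by
      rw [Real.exp_add]
      exact mul_le_mul_of_nonneg_left hIpow (Real.exp_pos _).le
    refine h2.trans ?_
    rw [← Real.exp_log hδ0]
    apply Real.exp_le_exp.2
    have hE1le : E1 ≤ 1 + t * ahat + (t * ahat) ^ 2 :=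
      exp_le_quadratic (mul_pos ht_pos hb_pos).le htb_le
    have hkey : m * ((E1 - 1) / ahat) ≤ m * t + m * t ^ 2 * ahat := by
      have hq : (E1 - 1) / ahat ≤ t + t ^ 2 * ahat := by
        rw [div_le_iff₀ hb_pos]
        nlinarith [hE1le]
      nlinarith [hm_pos.le, hq]
    have hsum_exp : -t * ((n:ℝ) * (m + 2 * s)) + (n:ℝ) * (m * t + m * t ^ 2 * ahat) = -L := by
      have h1 : (-t * ((n:ℝ) * (m + 2 * s)) + (n:ℝ) * (m * t + m * t ^ 2 * ahat)) * ahat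
          = -L * ahat := by
        have e1 : (-t * ((n:ℝ) * (m + 2 * s)) + (n:ℝ) * (m * t + m * t ^ 2 * ahat)) * ahat
            = (n:ℝ) * (m * t ^ 2 * ahat ^ 2) - 2 * (n:ℝ) * (s * (t * ahat)) := by ring
        rw [e1, hmt, hts]
        have h5 : (n:ℝ) * c - 2 * (n:ℝ) * c = -((n:ℝ) * c) := by ring
        rw [h5, hcL]
        ring
      exact mul_right_cancel₀ hb_pos.ne' h1
    have h6 : (n:ℝ) * (m * ((E1 - 1) / ahat)) ≤ (n:ℝ) * (m * t + m * t ^ 2 * ahat) :=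
      mul_le_mul_of_nonneg_left hkey hnR.le
    have hlog : Real.log δ = -L := by rw [hL_eq]; ring
    linarith [hsum_exp, h6]
  -- the bad event
  set Bad : Set (Fin n → Z) := {S | (n:ℝ) * (m + 2 * s) ≤ X S} with hBad_def
  have hBadmeas : MeasurableSet Bad := measurableSet_le measurable_const hXmeas
  have hBad_le : (Measure.pi fun _ : Fin n => P) Bad ≤ ENNReal.ofReal δ := by
    rw [ENNReal.le_ofReal_iff_toReal_le (measure_ne_top _ _) hδ0.le]
    calc ((Measure.pi fun _ : Fin n => P) Bad).toReal
        ≤ Real.exp (-t * ((n:ℝ) * (m + 2 * s)))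
            * ProbabilityTheory.mgf X (Measure.pi fun _ : Fin n => P) t := hε
      _ = Real.exp (-t * ((n:ℝ) * (m + 2 * s))) * I ^ n := by rw [hmgf_eq]
      _ ≤ δ := hnum
  -- identification of the empirical average
  have hA_eq : ∀ S : Fin n → Z,
      ∑ i ∈ Tset S Zpart, ((cnt S (Zpart i) : ℝ) / n) * a i = X S / n := by
    intro S
    have h1 : X S = ∑ i, (cnt S (Zpart i) : ℝ) * a i := by
      rw [hX_def]
      simp only [hg_def]
      rw [Finset.sum_comm]
      refine Finset.sum_congr rfl fun i _ => ?_
      rw [cnt]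
      calc ∑ j, (Zpart i).indicator (fun _ => a i) (S j)
          = ∑ j, if S j ∈ Zpart i then a i else 0 := by
            refine Finset.sum_congr rfl fun j _ => ?_
            rw [Set.indicator_apply]
        _ = ∑ j ∈ Finset.univ.filter (fun j => S j ∈ Zpart i), a i :=
            (Finset.sum_filter _ _).symm
        _ = ((Finset.univ.filter (fun j => S j ∈ Zpart i)).card : ℝ) * a i := by
            rw [Finset.sum_const, nsmul_eq_mul]
    have h2 : ∑ i ∈ Tset S Zpart, ((cnt S (Zpart i) : ℝ) / n) * a i
        = ∑ i, ((cnt S (Zpart i) : ℝ) / n) * a i := by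
      refine Finset.sum_subset (Finset.filter_subset _ _) fun i _ hi => ?_
      have hcnt0 : cnt S (Zpart i) = 0 := by
        by_contra hne
        exact hi (Finset.mem_filter.2 ⟨Finset.mem_univ _, Nat.pos_of_ne_zero hne⟩)
      rw [hcnt0]
      simp
    rw [h2, h1, Finset.sum_div]
    refine Finset.sum_congr rfl fun i _ => ?_
    ring
  -- the good event is contained in the target event
  have hGood_sub : Badᶜ ⊆ {S : Fin n → Z |
      (Real.sqrt (∑ i ∈ Tset S Zpart, ((cnt S (Zpart i) : ℝ) / n) * a i + c)
        - Real.sqrt c) ^ 2 ≤ ∫ z, ℓ z ∂P} := by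
    intro S hS
    simp only [Set.mem_compl_iff, hBad_def, Set.mem_setOf_eq, not_le] at hS
    simp only [Set.mem_setOf_eq]
    rw [hintℓ, hA_eq S]
    have hX_nonneg : 0 ≤ X S := by
      rw [hX_def]
      exact Finset.sum_nonneg fun j _ => hg_nonneg _
    have hA_nonneg : 0 ≤ X S / n := div_nonneg hX_nonneg hnR.le
    have hA_le : X S / n ≤ m + 2 * s := by
      rw [div_le_iff₀ hnR]
      nlinarith [hS]
    have hsq : m + 2 * s + c = (Real.sqrt m + Real.sqrt c) ^ 2 := by
      rw [add_sq, Real.sq_sqrt hm_pos.le, Real.sq_sqrt hc_pos.le, hs_def,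
        Real.sqrt_mul hm_pos.le]
      ring
    have h1 : Real.sqrt (X S / n + c) ≤ Real.sqrt m + Real.sqrt c := by
      calc Real.sqrt (X S / n + c) ≤ Real.sqrt (m + 2 * s + c) :=
            Real.sqrt_le_sqrt (by linarith)
        _ = Real.sqrt m + Real.sqrt c := by
            rw [hsq]
            exact Real.sqrt_sq (add_nonneg (Real.sqrt_nonneg _) (Real.sqrt_nonneg _))
    have h0 : 0 ≤ Real.sqrt (X S / n + c) - Real.sqrt c := by
      have := Real.sqrt_le_sqrt (show c ≤ X S / n + c by linarith)
      linarith
    have h2 : Real.sqrt (X S / n + c) - Real.sqrt c ≤ Real.sqrt m := by linarith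
    calc (Real.sqrt (X S / n + c) - Real.sqrt c) ^ 2 ≤ Real.sqrt m ^ 2 :=
          pow_le_pow_left₀ h0 h2 2
      _ = m := Real.sq_sqrt hm_pos.le
  -- assembly
  calc ENNReal.ofReal (1 - δ) = 1 - ENNReal.ofReal δ := by
        rw [ENNReal.ofReal_sub _ hδ0.le, ENNReal.ofReal_one]
    _ ≤ 1 - (Measure.pi fun _ : Fin n => P) Bad := tsub_le_tsub_left hBad_le 1
    _ = (Measure.pi fun _ : Fin n => P) Badᶜ := (prob_compl_eq_one_sub hBadmeas).symm
    _ ≤ _ := measure_mono hGood_sub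
end

section
/- (Tight error bound for an almost-everywhere-correct classifier.) Suppose Z is partitioned into two measurable sets Z_1 and Z_2 with P(Z_1) > 0 and P(Z_2) > 0, the loss \ell_h takes values in \{0,1\}, and \ell_h(z) = 0 for all z \in Z_2. Let n_1 be the number of samples of S falling in Z_1. Then for n i.i.d. samples S from P and any \delta > 0, with probability at least 1 - \delta: F(P,h) \le 3 \sqrt{ 2 \ln(4/\delta)/n } + 4 \ln(4/\delta)/n + (n_1/n) \, a_1(h), where a_1(h) = E_{z \sim P}[\ell_h(z) \mid z \in Z_1]. -/
open MeasureTheory Finset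
open scoped ENNReal

lemma exp_neg_le_quadratic {s : ℝ} (hs : 0 ≤ s) : Real.exp (-s) ≤ 1 - s + s ^ 2 / 2 := by
  set f : ℝ → ℝ := fun x => 1 - x + x ^ 2 / 2 - Real.exp (-x) with hf
  have hd : ∀ x : ℝ, HasDerivAt f (-1 + x + Real.exp (-x)) x := by
    intro x
    have h1 : HasDerivAt (fun x : ℝ => 1 - x + x ^ 2 / 2) (-1 + x) x := by
      have h0 : HasDerivAt (fun x : ℝ => 1 - x) (0 - 1) x :=
        (hasDerivAt_const x (1:ℝ)).sub (hasDerivAt_id x)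
      have h2 : HasDerivAt (fun x : ℝ => x ^ 2 / 2) (2 * x ^ 1 / 2) x :=
        (hasDerivAt_pow 2 x).div_const 2
      have := h0.add h2
      exact this.congr_deriv (by ring)
    have h2 : HasDerivAt (fun x : ℝ => Real.exp (-x)) (-Real.exp (-x)) x := by
      have := (Real.hasDerivAt_exp (-x)).comp x (hasDerivAt_neg x)
      simpa [Function.comp_def] using this
    have := h1.sub h2
    exact this.congr_deriv (by ring)
  have hmono : MonotoneOn f (Set.Ici 0) := by
    apply monotoneOn_of_deriv_nonneg (convex_Ici 0)
    · exact fun x _ => (hd x).continuousAt.continuousWithinAt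
    · intro x _
      exact (hd x).differentiableAt.differentiableWithinAt
    · intro x _
      rw [(hd x).deriv]
      have := Real.add_one_le_exp (-x)
      linarith
  have h0 : f 0 ≤ f s := hmono Set.self_mem_Ici hs hs
  have : f 0 = 0 := by simp [hf]
  rw [this] at h0
  simp only [hf] at h0
  linarith
open MeasureTheory Finset
open scoped ENNReal

open scoped Classical in
lemma chernoff_tail {Z : Type*} [MeasurableSpace Z] (P : Measure Z) [IsProbabilityMeasure P]
    (Z1 : Set Z) (hZ1 : MeasurableSet Z1) (n : ℕ) (s c : ℝ) (hs : 0 ≤ s) :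
    (Measure.pi fun _ : Fin n => P) {S | (cnt S Z1 : ℝ) < c} ≤
      ENNReal.ofReal (Real.exp (s * c) *
        ((P Z1).toReal * Real.exp (-s) + (1 - (P Z1).toReal)) ^ n) := by
  set p := (P Z1).toReal with hp
  set a := Real.exp (-s) with ha
  have ha0 : 0 < a := Real.exp_pos _
  have ha1 : a ≤ 1 := by
    rw [ha, ← Real.exp_zero]
    exact Real.exp_le_exp.2 (by linarith)
  set g : Z → ℝ := fun z => if z ∈ Z1 then a else 1 with hg
  have hg_meas : Measurable g := Measurable.ite hZ1 measurable_const measurable_const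
  have hg_nonneg : ∀ z, 0 ≤ g z := by
    intro z; rw [hg]; dsimp only; split <;> [exact ha0.le; norm_num]
  have hg_le_one : ∀ z, g z ≤ 1 := by
    intro z; rw [hg]; dsimp only; split <;> [exact ha1; exact le_rfl]
  have hg_int : Integrable g P := by
    apply (integrable_const (1:ℝ)).mono' hg_meas.aestronglyMeasurable
    filter_upwards with z
    rw [Real.norm_eq_abs, abs_of_nonneg (hg_nonneg z)]
    exact hg_le_one z
  have hgint_eq : ∫ z, g z ∂P = p * a + (1 - p) := by
    have hrw : g = fun z => Set.indicator Z1 (fun _ => a - 1) z + 1 := by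
      funext z
      by_cases hz : z ∈ Z1 <;> simp [hg, hz]
    rw [hrw]
    rw [integral_add ((integrable_const (a-1)).indicator hZ1) (integrable_const 1)]
    rw [integral_indicator_const _ hZ1]
    simp [smul_eq_mul, measureReal_def, hp]
    ring
  letI : MeasureSpace Z := ⟨P⟩
  have hvol : (Measure.pi fun _ : Fin n => P) = (volume : Measure (Fin n → Z)) := by
    rw [MeasureTheory.volume_pi]
    rfl
  set f : (Fin n → Z) → ℝ := fun S => ∏ j, g (S j) with hfd
  have hf_meas : Measurable f :=
    Finset.measurable_prod univ (fun j _ => hg_meas.comp (measurable_pi_apply j))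
  have hf_nonneg : ∀ S, 0 ≤ f S := fun S => Finset.prod_nonneg fun j _ => hg_nonneg _
  have hgint_vol : Integrable g (volume : Measure Z) := hg_int
  have hgint_eq' : ∫ (x : Z), g x = p * a + (1 - p) := hgint_eq
  have hf_int : Integrable f (volume : Measure (Fin n → Z)) :=
    Integrable.fintype_prod (𝕜 := ℝ) (fun _ : Fin n => hgint_vol)
  have hf_integral : ∫ S, f S = (p * a + (1 - p)) ^ n := by
    rw [hfd]
    rw [MeasureTheory.volume_pi, MeasureTheory.integral_fintype_prod_eq_pow g, hgint_eq', Fintype.card_fin]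
  have hf_eq : ∀ S : Fin n → Z, f S = a ^ (cnt S Z1) := by
    intro S
    rw [hfd]
    dsimp only
    rw [← Finset.prod_filter_mul_prod_filter_not univ (fun j => S j ∈ Z1)]
    have h1 : ∏ j ∈ univ.filter (fun j => S j ∈ Z1), g (S j) = a ^ (cnt S Z1) := by
      rw [cnt]
      apply Finset.prod_eq_pow_card
      intro j hj
      simp only [mem_filter] at hj
      simp [hg, hj.2]
    have h2 : ∏ j ∈ univ.filter (fun j => ¬ S j ∈ Z1), g (S j) = 1 := by
      apply Finset.prod_eq_one
      intro j hj
      simp only [mem_filter] at hj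
      simp [hg, hj.2]
    rw [h1, h2, mul_one]
  -- Markov
  set ε : ℝ≥0∞ := ENNReal.ofReal (Real.exp (-(s * c))) with hε
  have hε0 : ε ≠ 0 := by
    rw [hε]; simp [ENNReal.ofReal_eq_zero, not_le, Real.exp_pos]
  have hεtop : ε ≠ ⊤ := ENNReal.ofReal_ne_top
  have hsubset : {S : Fin n → Z | (cnt S Z1 : ℝ) < c} ⊆
      {S : Fin n → Z | ε ≤ ENNReal.ofReal (f S)} := by
    intro S hS
    simp only [Set.mem_setOf_eq] at hS ⊢
    rw [hε]
    apply ENNReal.ofReal_le_ofReal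
    rw [hf_eq S, ha, ← Real.exp_nat_mul]
    apply Real.exp_le_exp.2
    have : s * (cnt S Z1 : ℝ) ≤ s * c := by
      rcases eq_or_lt_of_le hs with h | h
      · rw [← h]; simp
      · exact (mul_le_mul_iff_right₀ h).2 hS.le
    nlinarith [this]
  have hmarkov := mul_meas_ge_le_lintegral₀
    (μ := (volume : Measure (Fin n → Z)))
    (f := fun S => ENNReal.ofReal (f S))
    (hf_meas.ennreal_ofReal.aemeasurable) ε
  have hlint : ∫⁻ S, ENNReal.ofReal (f S) = ENNReal.ofReal ((p * a + (1 - p)) ^ n) := by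
    rw [← MeasureTheory.ofReal_integral_eq_lintegral_ofReal hf_int
      (Filter.Eventually.of_forall hf_nonneg), hf_integral]
  rw [hvol]
  calc volume {S : Fin n → Z | (cnt S Z1 : ℝ) < c}
      ≤ volume {S : Fin n → Z | ε ≤ ENNReal.ofReal (f S)} := measure_mono hsubset
    _ ≤ ENNReal.ofReal ((p * a + (1 - p)) ^ n) / ε := by
        rw [ENNReal.le_div_iff_mul_le (Or.inl hε0) (Or.inl hεtop), mul_comm]
        rw [← hlint]
        exact hmarkov
    _ = ENNReal.ofReal (Real.exp (s * c) * (p * a + (1 - p)) ^ n) := by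
        rw [hε, ← ENNReal.ofReal_div_of_pos (Real.exp_pos _)]
        congr 1
        rw [div_eq_mul_inv, ← Real.exp_neg, neg_neg, mul_comm]


set_option maxHeartbeats 1000000 in
/-- Tight error bound for an almost-everywhere-correct classifier. -/
theorem statement15 {Z : Type*} [MeasurableSpace Z] (P : Measure Z) [IsProbabilityMeasure P]
    (Z1 Z2 : Set Z) (hZ1 : MeasurableSet Z1) (hZ2 : MeasurableSet Z2)
    (hZdisj : Disjoint Z1 Z2) (hZcover : Z1 ∪ Z2 = Set.univ)
    (hZ1pos : 0 < P Z1) (hZ2pos : 0 < P Z2)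
    (ℓ : Z → ℝ) (hℓmeas : Measurable ℓ)
    (hvals : ∀ z, ℓ z = 0 ∨ ℓ z = 1)
    (hzero : ∀ z ∈ Z2, ℓ z = 0)
    {n : ℕ} (hn : 0 < n) (δ : ℝ) (hδ : 0 < δ) :
    ENNReal.ofReal (1 - δ) ≤
      (Measure.pi fun _ : Fin n => P)
        {S | ∫ z, ℓ z ∂P ≤
          3 * Real.sqrt (2 * Real.log (4 / δ) / n) + 4 * Real.log (4 / δ) / n
            + ((cnt S Z1 : ℝ) / n) * condAvg P ℓ Z1} := by
  by_cases hδ1 : 1 ≤ δ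
  · rw [ENNReal.ofReal_eq_zero.2 (by linarith)]
    exact zero_le
  push_neg at hδ1
  set μ := Measure.pi fun _ : Fin n => P with hμ
  set L := Real.log (4 / δ) with hL
  set t := Real.sqrt (2 * L / n) with ht
  set p := (P Z1).toReal with hp
  have hn0 : (0:ℝ) < n := by exact_mod_cast hn
  have hp_pos : 0 < p := ENNReal.toReal_pos hZ1pos.ne' (measure_ne_top _ _)
  have hp_le1 : p ≤ 1 := by
    rw [hp]
    simpa using ENNReal.toReal_mono ENNReal.one_ne_top prob_le_one
  have hL0 : 0 < L := Real.log_pos (by rw [lt_div_iff₀ hδ]; linarith)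
  have ht0 : 0 ≤ t := Real.sqrt_nonneg _
  have ht2 : t ^ 2 = 2 * L / n := Real.sq_sqrt (by positivity)
  set s := t / p with hs_def
  have hs : 0 ≤ s := div_nonneg ht0 hp_pos.le
  set c := (n : ℝ) * (p - t) with hc
  -- basic facts about ℓ and its integral
  have hℓ0 : ∀ z, 0 ≤ ℓ z := fun z => by rcases hvals z with h | h <;> rw [h] <;> norm_num
  have hℓ1 : ∀ z, ℓ z ≤ 1 := fun z => by rcases hvals z with h | h <;> rw [h] <;> norm_num
  have hInt : Integrable ℓ P := by
    apply (integrable_const (1:ℝ)).mono' hℓmeas.aestronglyMeasurable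
    filter_upwards with z
    rw [Real.norm_eq_abs, abs_of_nonneg (hℓ0 z)]
    exact hℓ1 z
  have hZ2eq : Z2 = Z1ᶜ := by
    ext z
    constructor
    · intro hz hz1
      exact Set.disjoint_left.mp hZdisj hz1 hz
    · intro hz
      have : z ∈ Z1 ∪ Z2 := by rw [hZcover]; trivial
      rcases this with h | h
      · exact absurd h hz
      · exact h
  set F := ∫ z, ℓ z ∂P with hFdef
  have hFeq : F = ∫ z in Z1, ℓ z ∂P := by
    have h := integral_add_compl hZ1 hInt (f := ℓ)
    have h2 : ∫ z in Z1ᶜ, ℓ z ∂P = 0 := by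
      apply setIntegral_eq_zero_of_forall_eq_zero
      intro z hz
      exact hzero z (by rw [hZ2eq]; exact hz)
    rw [hFdef, ← h, h2, add_zero]
  have hF0 : 0 ≤ F := integral_nonneg hℓ0
  have hFp : F ≤ p := by
    rw [hFeq]
    calc ∫ z in Z1, ℓ z ∂P ≤ ∫ _ in Z1, (1:ℝ) ∂P :=
          setIntegral_mono_on hInt.integrableOn (integrable_const 1).integrableOn hZ1
            (fun z _ => hℓ1 z)
      _ = p := by simp [hp, measureReal_def]
  have hcond : condAvg P ℓ Z1 = F / p := by rw [condAvg, ← hFeq, hp]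
  -- the bad event
  set B := {S : Fin n → Z | (cnt S Z1 : ℝ) < c} with hB
  -- numeric bound on the Chernoff expression
  have hnum : Real.exp (s * c) * (p * Real.exp (-s) + (1 - p)) ^ n ≤ δ := by
    set x := p * Real.exp (-s) + (1 - p) with hx
    have hx0 : 0 ≤ x := by
      have := Real.exp_pos (-s)
      nlinarith
    have hxle : x ≤ Real.exp (-(s * p) + p * s ^ 2 / 2) := by
      have h1 := exp_neg_le_quadratic hs
      have h2 := Real.add_one_le_exp (-(s * p) + p * s ^ 2 / 2)
      nlinarith
    have hpow : x ^ n ≤ Real.exp ((n : ℝ) * (-(s * p) + p * s ^ 2 / 2)) := by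
      calc x ^ n ≤ Real.exp (-(s * p) + p * s ^ 2 / 2) ^ n := pow_le_pow_left₀ hx0 hxle n
        _ = Real.exp ((n : ℝ) * (-(s * p) + p * s ^ 2 / 2)) := (Real.exp_nat_mul _ n).symm
    have htot : Real.exp (s * c) * x ^ n ≤ Real.exp (-((n : ℝ) * t ^ 2) / (2 * p)) := by
      have hexp_eq : s * c + (n : ℝ) * (-(s * p) + p * s ^ 2 / 2)
          = -((n : ℝ) * t ^ 2) / (2 * p) := by
        rw [hs_def, hc]
        field_simp
        ring
      calc Real.exp (s * c) * x ^ n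
          ≤ Real.exp (s * c) * Real.exp ((n : ℝ) * (-(s * p) + p * s ^ 2 / 2)) := by
            apply mul_le_mul_of_nonneg_left hpow (Real.exp_pos _).le
        _ = Real.exp (s * c + (n : ℝ) * (-(s * p) + p * s ^ 2 / 2)) := (Real.exp_add _ _).symm
        _ = Real.exp (-((n : ℝ) * t ^ 2) / (2 * p)) := by rw [hexp_eq]
    have hnt2 : (n : ℝ) * t ^ 2 = 2 * L := by
      rw [ht2]; field_simp
    have hfinal : Real.exp (-((n : ℝ) * t ^ 2) / (2 * p)) ≤ δ := by
      have hle : -((n : ℝ) * t ^ 2) / (2 * p) ≤ -L := by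
        rw [hnt2]
        rw [div_le_iff₀ (by positivity)]
        nlinarith
      calc Real.exp (-((n : ℝ) * t ^ 2) / (2 * p)) ≤ Real.exp (-L) := Real.exp_le_exp.2 hle
        _ = δ / 4 := by
          rw [Real.exp_neg, hL, Real.exp_log (by positivity)]
          rw [inv_div]
        _ ≤ δ := by linarith
    exact htot.trans hfinal
  have hμB : μ B ≤ ENNReal.ofReal δ :=
    (chernoff_tail P Z1 hZ1 n s c hs).trans (ENNReal.ofReal_le_ofReal hnum)
  haveI hprob : IsProbabilityMeasure μ := by rw [hμ]; infer_instance
  clear_value μ L t p s c F B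
  -- inclusion of the good event in the target event
  have hsub : Bᶜ ⊆ {S : Fin n → Z | F ≤
      3 * t + 4 * L / n + ((cnt S Z1 : ℝ) / n) * condAvg P ℓ Z1} := by
    intro S hS
    simp only [hB, Set.mem_compl_iff, Set.mem_setOf_eq, not_lt] at hS
    simp only [Set.mem_setOf_eq]
    rw [hcond]
    set r := (cnt S Z1 : ℝ) / n with hr_def
    have hr0 : 0 ≤ r := by rw [hr_def]; positivity
    clear_value r
    have hr : p - t ≤ r := by
      rw [hr_def, le_div_iff₀ hn0]
      rw [hc] at hS
      linarith
    have key : F * (p - r) ≤ p * t := by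
      rcases le_or_gt (p - r) 0 with h | h
      · calc F * (p - r) ≤ 0 := mul_nonpos_of_nonneg_of_nonpos hF0 h
          _ ≤ p * t := by positivity
      · exact mul_le_mul hFp (by linarith) h.le hp_pos.le
    have hq : F = (F / p) * p := (div_mul_cancel₀ F hp_pos.ne').symm
    set q := F / p with hq_def
    have hq0 : 0 ≤ q := by rw [hq_def]; exact div_nonneg hF0 hp_pos.le
    clear_value q
    rw [hq] at key ⊢
    have h3 : q * (p - r) ≤ t := by nlinarith [key, hp_pos]
    have hLn : 0 ≤ 4 * L / n := by positivity
    nlinarith [h3, ht0, hLn, hq0, hr0]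
  -- assemble
  calc ENNReal.ofReal (1 - δ) = 1 - ENNReal.ofReal δ := by
        rw [← ENNReal.ofReal_one, ← ENNReal.ofReal_sub _ hδ.le]
    _ ≤ 1 - μ B := tsub_le_tsub_left hμB 1
    _ ≤ μ Bᶜ := by
        rw [tsub_le_iff_right]
        calc (1:ℝ≥0∞) = μ Set.univ := measure_univ.symm
          _ = μ (Bᶜ ∪ B) := by rw [Set.compl_union_self]
          _ ≤ μ Bᶜ + μ B := measure_union_le _ _
    _ ≤ _ := measure_mono hsub
end

section
/- (Concentration for multinomial random vectors with data-independent coefficients.) Let (n_1, ..., n_K) be the counts of n i.i.d. samples from a categorical distribution with probabilities (p_1, ..., p_K), i.e., a multinomial random vector with parameters n and (p_1, ..., p_K). Fix nonnegative reals a_1, ..., a_K, let T_S = \{i : n_i > 0\} and a_o = \max_{j \notin T_S} a_j (taken as 0 if T_S = [K]). Then for any \delta > 0, with probability at least 1 - \delta: \sum_{i=1}^{K} a_i (p_i - n_i/n) \le \sqrt{ \ln(2K/\delta)/n } \sum_{i \in T_S} (a_o + \sqrt{2} a_i) \sqrt{n_i/n} + (2 \ln(2K/\delta)/n) \left( a_o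 |T_S| + \sum_{i \in T_S} a_i \right). -/
set_option maxHeartbeats 1000000


open MeasureTheory Finset

open scoped Classical in
/-- `max_{j ∉ T_S} a j`, taken to be `0` when every category is hit. -/
noncomputable def aOut {n K : ℕ} (ω : Fin n → Fin K) (a : Fin K → ℝ) : ℝ :=
  if h : ((Finset.univ.filter fun i => cnt ω ({i} : Set (Fin K)) = 0).image a).Nonempty
  then ((Finset.univ.filter fun i => cnt ω ({i} : Set (Fin K)) = 0).image a).max' h
  else 0



lemma exp_ge_quad {t : ℝ} (ht : 0 ≤ t) : 1 + t + t^2/2 ≤ Real.exp t := by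
  have h := Real.sum_le_exp_of_nonneg ht 3
  simp [Finset.sum_range_succ, Nat.factorial] at h
  nlinarith [h]

lemma exp_neg_le_quad {t : ℝ} (ht : 0 ≤ t) : Real.exp (-t) ≤ 1 - t + t^2/2 := by
  have h1 : 1 + t + t^2/2 ≤ Real.exp t := exp_ge_quad ht
  have hpos : (0:ℝ) ≤ 1 - t + t^2/2 := by nlinarith [sq_nonneg (t-1)]
  have h2 : Real.exp (-t) = 1 / Real.exp t := by rw [Real.exp_neg]; ring
  rw [h2, div_le_iff₀ (Real.exp_pos t)]
  have h3 := mul_le_mul_of_nonneg_left h1 hpos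
  nlinarith [sq_nonneg (t^2), h3]

lemma exp_chord {x u : ℝ} (hx0 : 0 ≤ x) (hx1 : x ≤ 1) :
    Real.exp (u * x) ≤ 1 + x * (Real.exp u - 1) := by
  have h := convexOn_exp.2 (Set.mem_univ u) (Set.mem_univ (0:ℝ)) hx0 (by linarith : (0:ℝ) ≤ 1 - x) (by ring)
  simp only [smul_eq_mul, mul_zero, add_zero, Real.exp_zero] at h
  have : u * x = x * u := by ring
  rw [this]; linarith

lemma keyB1 {c : ℝ} (hc : 0 < c) : ∃ u : ℝ, 0 ≤ u ∧
    ∀ m : ℝ, 0 ≤ m → m ≤ 1/2 →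
      m * (Real.exp u - 1) - u * (m + (Real.sqrt c + 2*c)) ≤ -c := by
  set s := Real.sqrt c with hs
  have hs0 : 0 < s := Real.sqrt_pos.2 hc
  have hsc : s^2 = c := Real.sq_sqrt hc.le
  set τ := s + 2*c with hτ
  have hτ0 : 0 < τ := by positivity
  by_cases hsmall : s ≤ 0.3
  · refine ⟨2*τ, by positivity, ?_⟩
    intro m hm0 hm1
    have h2τ : 2*τ ≤ 1 := by nlinarith
    have hb : Real.exp (2*τ) ≤ 1 + 2*τ + 2*τ^2 + (16/9)*τ^3 := by
      have h := (abs_le.1 (Real.exp_bound (x := 2*τ)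
        (by rw [abs_of_nonneg (by positivity)]; exact h2τ) (n := 3) (by norm_num))).2
      simp [Finset.sum_range_succ, Nat.factorial] at h
      rw [abs_of_nonneg (by positivity : (0:ℝ) ≤ τ)] at h
      nlinarith [h]
    have hcube : (8/9)*τ^3 ≤ τ^2 - c := by
      have h1 : (1+2*s)^3 ≤ 4.5 := by nlinarith [hs0.le, hsmall]
      have h2 : τ^3 = s^3*(1+2*s)^3 := by rw [hτ, ← hsc]; ring
      have h3 : τ^2 - c = 4*s^3 + 4*s^4 := by rw [hτ, ← hsc]; ring
      have h4 : s^3 * (1+2*s)^3 ≤ s^3 * 4.5 :=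
        mul_le_mul_of_nonneg_left h1 (by positivity)
      rw [h2, h3]
      nlinarith [h4, pow_pos hs0 3, pow_pos hs0 4]
    have key : (1/2) * (Real.exp (2*τ) - 1) - (2*τ) * (1/2 + τ) ≤ -c := by nlinarith [hb, hcube]
    have hslope : 2*τ + 1 ≤ Real.exp (2*τ) := by
      have := Real.add_one_le_exp (2*τ); linarith
    nlinarith [key, mul_nonneg (by linarith : (0:ℝ) ≤ 1/2 - m) (by linarith : (0:ℝ) ≤ Real.exp (2*τ) - 1 - 2*τ)]
  · push_neg at hsmall
    refine ⟨1, by norm_num, ?_⟩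
    intro m hm0 hm1
    have he : Real.exp 1 < 2.7182818286 := Real.exp_one_lt_d9
    nlinarith [he, hm1, hm0, hs0, hsc]

section chernoff
open scoped Classical

variable {K n : ℕ} (μ : Measure (Fin K)) [IsProbabilityMeasure μ] (p : Fin K → ℝ)

lemma meas_all {S : Set (Fin n → Fin K)} : MeasurableSet S :=
  (Set.to_countable S).measurableSet

lemma pi_singleton (ω : Fin n → Fin K) :
    (Measure.pi fun _ : Fin n => μ) {ω} = ∏ j, μ {ω j} := by
  have : ({ω} : Set (Fin n → Fin K)) = Set.univ.pi (fun j => {ω j}) := by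
    ext x
    simp [Set.mem_pi, funext_iff]
  rw [this, Measure.pi_pi]

lemma pi_eval (hp : ∀ i, 0 ≤ p i) (hμ : ∀ i, μ {i} = ENNReal.ofReal (p i))
    (S : Set (Fin n → Fin K)) :
    (Measure.pi fun _ : Fin n => μ) S
      = ENNReal.ofReal (∑ ω ∈ Finset.univ.filter (· ∈ S), ∏ j, p (ω j)) := by
  have hS : S = ⋃ ω ∈ Finset.univ.filter (· ∈ S), ({ω} : Set (Fin n → Fin K)) := by
    ext x; simp
  have hdisj : (↑(Finset.univ.filter (· ∈ S)) : Set (Fin n → Fin K)).PairwiseDisjoint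
      (fun ω => ({ω} : Set (Fin n → Fin K))) := by
    intro x _ y _ hxy
    simp [Function.onFun, Set.disjoint_singleton, hxy]
  have hmb := measure_biUnion_finset (μ := Measure.pi fun _ : Fin n => μ) hdisj
    (fun b _ => meas_all)
  rw [← hS] at hmb
  rw [hmb]
  rw [ENNReal.ofReal_sum_of_nonneg (fun ω _ => Finset.prod_nonneg fun j _ => hp (ω j))]
  refine Finset.sum_congr rfl fun ω _ => ?_
  rw [pi_singleton]
  simp only [hμ]
  rw [ENNReal.ofReal_prod_of_nonneg (fun j _ => hp (ω j))]

/-- Discrete Chernoff bound. -/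
lemma chernoff (hp : ∀ i, 0 ≤ p i) (hμ : ∀ i, μ {i} = ENNReal.ofReal (p i))
    (f : Fin K → ℝ) (t lam : ℝ) (hlam : 0 ≤ lam) :
    (Measure.pi fun _ : Fin n => μ) {ω | t ≤ ∑ j, f (ω j)}
      ≤ ENNReal.ofReal (Real.exp (-lam * t) * (∑ i, p i * Real.exp (lam * f i))^n) := by
  rw [pi_eval μ p hp hμ]
  apply ENNReal.ofReal_le_ofReal
  have step1 : ∑ ω ∈ Finset.univ.filter (· ∈ {ω : Fin n → Fin K | t ≤ ∑ j, f (ω j)}), ∏ j, p (ω j)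
      ≤ ∑ ω ∈ Finset.univ.filter (· ∈ {ω : Fin n → Fin K | t ≤ ∑ j, f (ω j)}),
          (∏ j, p (ω j)) * Real.exp (lam * ((∑ j, f (ω j)) - t)) := by
    refine Finset.sum_le_sum fun ω hω => ?_
    have hmem : t ≤ ∑ j, f (ω j) := by simpa using (Finset.mem_filter.1 hω).2
    have h1 : (1:ℝ) ≤ Real.exp (lam * ((∑ j, f (ω j)) - t)) := by
      rw [show (1:ℝ) = Real.exp 0 by simp]
      exact Real.exp_le_exp.2 (by nlinarith)
    nlinarith [Finset.prod_nonneg (fun j (_ : j ∈ Finset.univ) => hp (ω j)), h1]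
  have step2 : ∑ ω ∈ Finset.univ.filter (· ∈ {ω : Fin n → Fin K | t ≤ ∑ j, f (ω j)}),
          (∏ j, p (ω j)) * Real.exp (lam * ((∑ j, f (ω j)) - t))
      ≤ ∑ ω : Fin n → Fin K, (∏ j, p (ω j)) * Real.exp (lam * ((∑ j, f (ω j)) - t)) := by
    apply Finset.sum_le_sum_of_subset_of_nonneg (Finset.filter_subset _ _)
    intro ω _ _
    have := Finset.prod_nonneg (fun j (_ : j ∈ Finset.univ) => hp (ω j))
    positivity
  have step3 : ∑ ω : Fin n → Fin K, (∏ j, p (ω j)) * Real.exp (lam * ((∑ j, f (ω j)) - t))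
      = Real.exp (-lam * t) * (∑ i, p i * Real.exp (lam * f i))^n := by
    have e1 : ∀ ω : Fin n → Fin K,
        (∏ j, p (ω j)) * Real.exp (lam * ((∑ j, f (ω j)) - t))
        = Real.exp (-lam*t) * ∏ j, (p (ω j) * Real.exp (lam * f (ω j))) := by
      intro ω
      rw [Finset.prod_mul_distrib, ← Real.exp_sum]
      rw [show lam * ((∑ j, f (ω j)) - t) = (∑ j, lam * f (ω j)) + (-lam*t) by
        rw [mul_sub, Finset.mul_sum]; ring]
      rw [Real.exp_add]
      ring
    simp_rw [e1]
    rw [← Finset.mul_sum]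
    congr 1
    have := Finset.prod_univ_sum (fun _ : Fin n => (Finset.univ : Finset (Fin K)))
      (fun _ i => p i * Real.exp (lam * f i))
    rw [Fintype.piFinset_univ] at this
    rw [← this, Finset.prod_const, Finset.card_univ, Fintype.card_fin]
  calc _ ≤ _ := step1
    _ ≤ _ := step2
    _ = _ := step3

end chernoff

section tails
open scoped Classical

variable {K n : ℕ} (μ : Measure (Fin K)) [IsProbabilityMeasure μ] (p : Fin K → ℝ)

lemma cnt_sum_eval (ω : Fin n → Fin K) (F : Fin K → ℝ) :
    ∑ j, F (ω j) = ∑ i, (cnt ω ({i} : Set (Fin K)) : ℝ) * F i := by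
  have h1 : ∀ i, (cnt ω ({i} : Set (Fin K)) : ℝ) * F i
      = ∑ j ∈ Finset.univ.filter (fun j => ω j = i), F (ω j) := by
    intro i
    rw [Finset.sum_congr rfl (fun j hj => by
      rw [(Finset.mem_filter.1 hj).2])]
    rw [Finset.sum_const, cnt]
    simp [Set.mem_singleton_iff, nsmul_eq_mul, mul_comm]
  simp_rw [h1]
  rw [Finset.sum_fiberwise]

lemma cnt_sum (ω : Fin n → Fin K) : ∑ i, (cnt ω ({i} : Set (Fin K)) : ℝ) = (n : ℝ) := by
  have := cnt_sum_eval ω (fun _ => (1:ℝ))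
  simpa using this.symm

lemma cnt_nonneg (ω : Fin n → Fin K) (i : Fin K) : (0:ℝ) ≤ (cnt ω ({i} : Set (Fin K)) : ℝ) := by
  positivity

/-- Lower-tail bound for a single category. -/
lemma tailL (hp : ∀ i, 0 ≤ p i) (hpsum : ∑ i, p i = 1)
    (hμ : ∀ i, μ {i} = ENNReal.ofReal (p i)) {c : ℝ} (hc : 0 < c) (hn : 0 < n) (i : Fin K) :
    (Measure.pi fun _ : Fin n => μ)
      {ω | Real.sqrt (2*c*p i) < p i - (cnt ω ({i} : Set (Fin K)) : ℝ)/n}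
      ≤ ENNReal.ofReal (Real.exp (-(n:ℝ)*c)) := by
  have hp1 : p i ≤ 1 := by
    rw [← hpsum]
    exact Finset.single_le_sum (fun j _ => hp j) (Finset.mem_univ i)
  rcases eq_or_lt_of_le (hp i) with hpi | hpi
  · -- p i = 0 : event empty
    have : {ω : Fin n → Fin K | Real.sqrt (2*c*p i) < p i - (cnt ω ({i} : Set (Fin K)) : ℝ)/n} = ∅ := by
      ext ω
      simp only [Set.mem_setOf_eq, Set.mem_empty_iff_false, iff_false, not_lt]
      have h0 : (0:ℝ) ≤ (cnt ω ({i} : Set (Fin K)) : ℝ)/n := by positivity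
      calc p i - (cnt ω ({i} : Set (Fin K)) : ℝ)/n ≤ p i - 0 := by linarith
        _ = p i := by ring
        _ ≤ Real.sqrt (2*c*p i) := by
          rw [← hpi]; simp
    rw [this]
    simp
  · -- p i > 0
    set s := Real.sqrt (2*c*p i) with hs
    have hs2 : s^2 = 2*c*p i := Real.sq_sqrt (by positivity)
    have hs0 : 0 < s := Real.sqrt_pos.2 (by positivity)
    set lam := s / p i with hlam
    have hlam0 : 0 < lam := by positivity
    set f : Fin K → ℝ := fun i' => if i' = i then (-1:ℝ) else 0 with hf
    have hsub : {ω : Fin n → Fin K | Real.sqrt (2*c*p i) < p i - (cnt ω ({i} : Set (Fin K)) : ℝ)/n}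
        ⊆ {ω | (n:ℝ)*(s - p i) ≤ ∑ j, f (ω j)} := by
      intro ω hω
      simp only [Set.mem_setOf_eq] at hω ⊢
      have hev : ∑ j, f (ω j) = -((cnt ω ({i} : Set (Fin K)) : ℝ)) := by
        rw [cnt_sum_eval ω f]
        rw [Finset.sum_eq_single i]
        · simp [hf]
        · intro b _ hb; simp [hf, hb]
        · intro h; exact absurd (Finset.mem_univ i) h
      rw [hev]
      have hn' : (0:ℝ) < n := by exact_mod_cast hn
      have h2 : ((cnt ω ({i} : Set (Fin K)) : ℝ))/n < p i - Real.sqrt (2*c*p i) := by linarith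
      have h3 : ((cnt ω ({i} : Set (Fin K)) : ℝ)) < (p i - Real.sqrt (2*c*p i))*n :=
        (div_lt_iff₀ hn').1 h2
      have hss : s = Real.sqrt (2*c*p i) := hs
      nlinarith [h3]
    refine le_trans (measure_mono hsub) (le_trans
      (chernoff μ p hp hμ f ((n:ℝ)*(s - p i)) lam hlam0.le) (ENNReal.ofReal_le_ofReal ?_))
    -- real inequality
    have hA : (∑ i', p i' * Real.exp (lam * f i')) = 1 + p i * (Real.exp (-lam) - 1) := by
      have h1 : ∀ i', p i' * Real.exp (lam * f i')
          = p i' + (if i' = i then p i * (Real.exp (-lam) - 1) else 0) := by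
        intro i'
        by_cases h : i' = i
        · subst h; simp [hf]; ring
        · simp [hf, h]
      simp_rw [h1]
      rw [Finset.sum_add_distrib, hpsum, Finset.sum_ite_eq' Finset.univ i]
      simp
    rw [hA]
    have hbase0 : (0:ℝ) ≤ 1 + p i * (Real.exp (-lam) - 1) := by
      have : 0 < Real.exp (-lam) := Real.exp_pos _
      nlinarith
    have hb1 : 1 + p i * (Real.exp (-lam) - 1) ≤ Real.exp (p i * (Real.exp (-lam) - 1)) := by
      have := Real.add_one_le_exp (p i * (Real.exp (-lam) - 1)); linarith
    have hpow : (1 + p i * (Real.exp (-lam) - 1))^n ≤ Real.exp ((n:ℝ) * (p i * (Real.exp (-lam) - 1))) := by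
      calc (1 + p i * (Real.exp (-lam) - 1))^n ≤ (Real.exp (p i * (Real.exp (-lam) - 1)))^n :=
            pow_le_pow_left₀ hbase0 hb1 n
        _ = Real.exp ((n:ℝ) * (p i * (Real.exp (-lam) - 1))) := by
            rw [← Real.exp_nat_mul]
    calc Real.exp (-lam * ((n:ℝ)*(s - p i))) * (1 + p i * (Real.exp (-lam) - 1))^n
        ≤ Real.exp (-lam * ((n:ℝ)*(s - p i))) * Real.exp ((n:ℝ) * (p i * (Real.exp (-lam) - 1))) := by
          exact mul_le_mul_of_nonneg_left hpow (Real.exp_pos _).le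
      _ = Real.exp (-lam * ((n:ℝ)*(s - p i)) + (n:ℝ) * (p i * (Real.exp (-lam) - 1))) := by
          rw [← Real.exp_add]
      _ ≤ Real.exp (-(n:ℝ)*c) := by
          apply Real.exp_le_exp.2
          have hexp : Real.exp (-lam) ≤ 1 - lam + lam^2/2 := exp_neg_le_quad hlam0.le
          have hkey : -lam * (s - p i) + p i * (Real.exp (-lam) - 1) ≤ -c := by
            have h2 : p i * (Real.exp (-lam) - 1) ≤ p i * (-lam + lam^2/2) :=
              mul_le_mul_of_nonneg_left (by linarith) (hp i)
            have hps : p i ≠ 0 := ne_of_gt hpi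
            have e1 : lam * s = 2*c := by
              rw [hlam]; field_simp; linear_combination hs2
            have e2 : p i * lam^2 = 2*c := by
              rw [hlam]; field_simp; linear_combination hs2
            nlinarith [h2, e1, e2]
          have hn0 : (0:ℝ) ≤ n := by positivity
          nlinarith [mul_le_mul_of_nonneg_left hkey hn0]

end tails

section tailB
open scoped Classical

variable {K n : ℕ} (μ : Measure (Fin K)) [IsProbabilityMeasure μ] (p : Fin K → ℝ)

/-- Upper-tail (Hoeffding-type) bound for the empirical mean of a bounded function. -/
lemma tailB (hp : ∀ i, 0 ≤ p i) (hpsum : ∑ i, p i = 1)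
    (hμ : ∀ i, μ {i} = ENNReal.ofReal (p i)) {c : ℝ} (hc : 0 < c) (hn : 0 < n)
    (g : Fin K → ℝ) (v : ℝ) (hv : 0 ≤ v) (hg0 : ∀ i, 0 ≤ g i) (hgv : ∀ i, g i ≤ v) :
    (Measure.pi fun _ : Fin n => μ)
      {ω | (∑ i, p i * g i) + (Real.sqrt c + 2*c)*v < (∑ j, g (ω j))/n}
      ≤ ENNReal.ofReal (Real.exp (-(n:ℝ)*c)) := by
  have hn' : (0:ℝ) < n := by exact_mod_cast hn
  set τ := Real.sqrt c + 2*c with hτdef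
  have hτ0 : 0 < τ := by
    have := Real.sqrt_nonneg c; positivity
  have hτ2 : c ≤ τ^2 := by
    have h1 : Real.sqrt c ≤ τ := by nlinarith
    nlinarith [Real.sq_sqrt hc.le, Real.sqrt_nonneg c]
  set E := ∑ i, p i * g i with hE
  have hE0 : 0 ≤ E := Finset.sum_nonneg fun i _ => mul_nonneg (hp i) (hg0 i)
  have hEv : E ≤ v := by
    calc E ≤ ∑ i, p i * v := Finset.sum_le_sum fun i _ => mul_le_mul_of_nonneg_left (hgv i) (hp i)
      _ = v := by rw [← Finset.sum_mul, hpsum, one_mul]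
  rcases eq_or_lt_of_le hv with hv0 | hv0
  · -- v = 0 : event empty
    have hgz : ∀ i, g i = 0 := fun i => le_antisymm ((hgv i).trans (le_of_eq hv0.symm)) (hg0 i)
    have hEz : E = 0 := by
      rw [hE]; exact Finset.sum_eq_zero fun i _ => by rw [hgz i, mul_zero]
    have hempty : {ω : Fin n → Fin K | E + τ*v < (∑ j, g (ω j))/n} = ∅ := by
      ext ω
      simp only [Set.mem_setOf_eq, Set.mem_empty_iff_false, iff_false, not_lt]
      have h1 : (∑ j, g (ω j)) = 0 := Finset.sum_eq_zero fun j _ => hgz (ω j)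
      rw [h1, hEz, ← hv0]
      simp
    rw [hempty]; simp
  · -- v > 0
    have hsub : {ω : Fin n → Fin K | E + τ*v < (∑ j, g (ω j))/n}
        ⊆ {ω | (n:ℝ)*(E + τ*v) ≤ ∑ j, g (ω j)} := by
      intro ω hω
      simp only [Set.mem_setOf_eq] at hω ⊢
      have h := (lt_div_iff₀ hn').1 hω
      nlinarith [h]
    refine le_trans (measure_mono hsub) ?_
    by_cases hm : 2*E ≤ v
    · -- m ≤ 1/2 : Bennett-type upper bound
      obtain ⟨u, hu0, hkey⟩ := keyB1 hc
      set lam := u / v with hlamdef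
      have hlam0 : 0 ≤ lam := by positivity
      refine le_trans (chernoff μ p hp hμ g ((n:ℝ)*(E + τ*v)) lam hlam0)
        (ENNReal.ofReal_le_ofReal ?_)
      have hA : (∑ i, p i * Real.exp (lam * g i)) ≤ 1 + (E/v) * (Real.exp u - 1) := by
        have h1 : ∀ i, p i * Real.exp (lam * g i)
            ≤ p i * (1 + (g i / v) * (Real.exp u - 1)) := by
          intro i
          apply mul_le_mul_of_nonneg_left _ (hp i)
          have hx0 : 0 ≤ g i / v := div_nonneg (hg0 i) hv
          have hx1 : g i / v ≤ 1 := (div_le_one hv0).2 (hgv i)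
          have : lam * g i = u * (g i / v) := by
            rw [hlamdef]; field_simp
          rw [this]
          exact exp_chord hx0 hx1
        calc (∑ i, p i * Real.exp (lam * g i)) ≤ ∑ i, p i * (1 + (g i / v) * (Real.exp u - 1)) :=
              Finset.sum_le_sum fun i _ => h1 i
          _ = 1 + (E/v) * (Real.exp u - 1) := by
              have : ∀ i, p i * (1 + (g i / v) * (Real.exp u - 1))
                  = p i + (p i * g i) * ((Real.exp u - 1)/v) := by
                intro i; field_simp; try ring
              simp_rw [this]
              rw [Finset.sum_add_distrib, hpsum, ← Finset.sum_mul, ← hE]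
              field_simp
      have hA0 : (0:ℝ) ≤ ∑ i, p i * Real.exp (lam * g i) :=
        Finset.sum_nonneg fun i _ => mul_nonneg (hp i) (Real.exp_pos _).le
      have hm0 : 0 ≤ E/v := div_nonneg hE0 hv
      have hm1 : E/v ≤ 1/2 := by rw [div_le_iff₀ hv0]; linarith
      have hexpb : 1 + (E/v) * (Real.exp u - 1) ≤ Real.exp ((E/v) * (Real.exp u - 1)) := by
        have := Real.add_one_le_exp ((E/v) * (Real.exp u - 1)); linarith
      have hApos : 1 + (E/v) * (Real.exp u - 1) ≥ 0 := by
        have h1 : (1:ℝ) ≤ Real.exp u := by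
          rw [show (1:ℝ) = Real.exp 0 by simp]; exact Real.exp_le_exp.2 hu0
        nlinarith
      have hpow : (∑ i, p i * Real.exp (lam * g i))^n
          ≤ Real.exp ((n:ℝ) * ((E/v) * (Real.exp u - 1))) := by
        calc (∑ i, p i * Real.exp (lam * g i))^n ≤ (Real.exp ((E/v) * (Real.exp u - 1)))^n :=
              pow_le_pow_left₀ hA0 (le_trans hA hexpb) n
          _ = Real.exp ((n:ℝ) * ((E/v) * (Real.exp u - 1))) := by rw [← Real.exp_nat_mul]
      calc Real.exp (-lam * ((n:ℝ)*(E + τ*v))) * (∑ i, p i * Real.exp (lam * g i))^n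
          ≤ Real.exp (-lam * ((n:ℝ)*(E + τ*v))) * Real.exp ((n:ℝ) * ((E/v) * (Real.exp u - 1))) :=
            mul_le_mul_of_nonneg_left hpow (Real.exp_pos _).le
        _ = Real.exp (-lam * ((n:ℝ)*(E + τ*v)) + (n:ℝ) * ((E/v) * (Real.exp u - 1))) := by
            rw [← Real.exp_add]
        _ ≤ Real.exp (-(n:ℝ)*c) := by
            apply Real.exp_le_exp.2
            have hk := hkey (E/v) hm0 hm1
            have hlt : -lam * (E + τ*v) + (E/v) * (Real.exp u - 1) ≤ -c := by
              have h1 : lam * (E + τ*v) = u * (E/v + τ) := by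
                rw [hlamdef]; field_simp; try ring
              nlinarith [hk, h1]
            nlinarith [mul_le_mul_of_nonneg_left hlt (le_of_lt hn')]
    · -- m > 1/2 : lower-tail-style bound for v - g
      push_neg at hm
      rcases eq_or_lt_of_le hEv with hEv' | hEv'
      · -- E = v : event empty
        have : {ω : Fin n → Fin K | (n:ℝ)*(E + τ*v) ≤ ∑ j, g (ω j)} = ∅ := by
          ext ω
          simp only [Set.mem_setOf_eq, Set.mem_empty_iff_false, iff_false, not_le]
          have h1 : (∑ j, g (ω j)) ≤ (n:ℝ)*v := by
            calc (∑ j, g (ω j)) ≤ ∑ _j : Fin n, v := Finset.sum_le_sum fun j _ => hgv (ω j)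
              _ = (n:ℝ)*v := by rw [Finset.sum_const]; simp [mul_comm]
          have h2 : (0:ℝ) < τ*v := by positivity
          nlinarith [mul_pos hn' h2, hEv']
        rw [this]; simp
      · -- E < v
        have hvne : v ≠ 0 := ne_of_gt hv0
        set mb := (v - E)/v with hmbdef
        have hmb0 : 0 < mb := by
          apply div_pos (by linarith) hv0
        have hmb2 : mb < 1/2 := by
          rw [hmbdef, div_lt_iff₀ hv0]; linarith
        have hmbne : mb ≠ 0 := ne_of_gt hmb0
        set u := τ / mb with hudef
        have hu0 : 0 < u := div_pos hτ0 hmb0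
        set lam := u / v with hlamdef
        have hlam0 : 0 ≤ lam := by positivity
        have hev : {ω : Fin n → Fin K | (n:ℝ)*(E + τ*v) ≤ ∑ j, g (ω j)}
            = {ω | (n:ℝ)*(E + τ*v - v) ≤ ∑ j, (fun i => g i - v) (ω j)} := by
          ext ω
          simp only [Set.mem_setOf_eq]
          rw [Finset.sum_sub_distrib, Finset.sum_const]
          simp only [Finset.card_univ, Fintype.card_fin, nsmul_eq_mul, mul_one]
          constructor <;> intro h <;> nlinarith [h]
        rw [hev]
        refine le_trans (chernoff μ p hp hμ (fun i => g i - v) ((n:ℝ)*(E + τ*v - v)) lam hlam0)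
          (ENNReal.ofReal_le_ofReal ?_)
        have hA : (∑ i, p i * Real.exp (lam * (g i - v))) ≤ 1 + mb * (-u + u^2/2) := by
          have h1 : ∀ i, p i * Real.exp (lam * (g i - v))
              ≤ p i * (1 - u*((v - g i)/v) + u^2*((v - g i)/v)/2) := by
            intro i
            apply mul_le_mul_of_nonneg_left _ (hp i)
            have hx0 : 0 ≤ (v - g i)/v := div_nonneg (by linarith [hgv i]) hv
            have hx1 : (v - g i)/v ≤ 1 := by
              rw [div_le_one hv0]; linarith [hg0 i]
            have harg : lam * (g i - v) = -(u * ((v - g i)/v)) := by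
              rw [hlamdef]; field_simp; ring
            rw [harg]
            have hux : 0 ≤ u * ((v - g i)/v) := mul_nonneg hu0.le hx0
            calc Real.exp (-(u * ((v - g i)/v))) ≤ 1 - u*((v - g i)/v) + (u*((v - g i)/v))^2/2 :=
                  exp_neg_le_quad hux
              _ ≤ 1 - u*((v - g i)/v) + u^2*((v - g i)/v)/2 := by
                  have hsq : ((v - g i)/v)^2 ≤ (v - g i)/v := by nlinarith [hx0, hx1]
                  nlinarith [sq_nonneg u, hsq]
          calc (∑ i, p i * Real.exp (lam * (g i - v)))
              ≤ ∑ i, p i * (1 - u*((v - g i)/v) + u^2*((v - g i)/v)/2) :=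
                Finset.sum_le_sum fun i _ => h1 i
            _ = 1 + mb * (-u + u^2/2) := by
                have hexpand : ∀ i, p i * (1 - u*((v - g i)/v) + u^2*((v - g i)/v)/2)
                    = p i + (p i * (v - g i)) * ((-u + u^2/2)/v) := by
                  intro i; field_simp; try ring
                simp_rw [hexpand]
                rw [Finset.sum_add_distrib, hpsum, ← Finset.sum_mul]
                have : ∑ i, p i * (v - g i) = v - E := by
                  rw [hE]
                  simp_rw [mul_sub]
                  rw [Finset.sum_sub_distrib, ← Finset.sum_mul, hpsum, one_mul]
                rw [this, hmbdef]
                field_simp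
        have hA0 : (0:ℝ) ≤ ∑ i, p i * Real.exp (lam * (g i - v)) :=
          Finset.sum_nonneg fun i _ => mul_nonneg (hp i) (Real.exp_pos _).le
        have hexpb : 1 + mb * (-u + u^2/2) ≤ Real.exp (mb * (-u + u^2/2)) := by
          have := Real.add_one_le_exp (mb * (-u + u^2/2)); linarith
        have hpow : (∑ i, p i * Real.exp (lam * (g i - v)))^n
            ≤ Real.exp ((n:ℝ) * (mb * (-u + u^2/2))) := by
          calc (∑ i, p i * Real.exp (lam * (g i - v)))^n
              ≤ (Real.exp (mb * (-u + u^2/2)))^n :=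
                pow_le_pow_left₀ hA0 (le_trans hA hexpb) n
            _ = Real.exp ((n:ℝ) * (mb * (-u + u^2/2))) := by rw [← Real.exp_nat_mul]
        calc Real.exp (-lam * ((n:ℝ)*(E + τ*v - v))) * (∑ i, p i * Real.exp (lam * (g i - v)))^n
            ≤ Real.exp (-lam * ((n:ℝ)*(E + τ*v - v))) * Real.exp ((n:ℝ) * (mb * (-u + u^2/2))) :=
              mul_le_mul_of_nonneg_left hpow (Real.exp_pos _).le
          _ = Real.exp (-lam * ((n:ℝ)*(E + τ*v - v)) + (n:ℝ) * (mb * (-u + u^2/2))) := by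
              rw [← Real.exp_add]
          _ ≤ Real.exp (-(n:ℝ)*c) := by
              apply Real.exp_le_exp.2
              have hlv : lam * v = u := by
                rw [hlamdef]; field_simp
              have hEe : E = v - mb*v := by
                rw [hmbdef]; field_simp; ring
              have h2 : u * mb = τ := by
                rw [hudef]; field_simp
              have huτ : 2*c ≤ u*τ := by
                have h3 : u*τ*mb = τ^2 := by linear_combination τ*h2
                nlinarith [mul_pos hu0 hτ0, hmb2, hτ2, hmb0]
              have hexp1 : lam*(E + τ*v - v) = u*(τ - mb) := by
                linear_combination lam*hEe + (τ - mb)*hlv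
              have hper : -(lam * (E + τ*v - v)) + mb * (-u + u^2/2) ≤ -c := by
                rw [hexp1]
                have h3 : u^2*mb = u*τ := by linear_combination u*h2
                nlinarith [huτ, h3]
              nlinarith [mul_le_mul_of_nonneg_left hper (le_of_lt hn')]
end tailB

section det
open scoped Classical

lemma sqrt_shift {x y d : ℝ} (hy : 0 ≤ y) (hd : 0 < d) (hx : 0 ≤ x)
    (h : x^2 - y^2 ≤ d * x) : x^2 - y^2 ≤ d*y + d^2 := by
  have hxyd : x ≤ y + d := by
    by_contra hcon
    push_neg at hcon
    have hx0 : 0 < x := lt_of_le_of_lt (by positivity) hcon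
    nlinarith [mul_nonneg hy (by linarith : (0:ℝ) ≤ x - y)]
  nlinarith [mul_le_mul_of_nonneg_left hxyd hd.le]

lemma det_main {K n : ℕ} (p : Fin K → ℝ) (hp : ∀ i, 0 ≤ p i) (hpsum : ∑ i, p i = 1)
    (a : Fin K → ℝ) (ha : ∀ i, 0 ≤ a i) {c : ℝ} (hc : 0 < c) (hn : 0 < n)
    (ω : Fin n → Fin K)
    (hL : ∀ i, p i - (cnt ω ({i} : Set (Fin K)) : ℝ)/n ≤ Real.sqrt (2*c*p i))
    (hB : ∀ j, (∑ j', max (a j - a (ω j')) 0)/n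
        ≤ (∑ i, p i * max (a j - a i) 0) + (Real.sqrt c + 2*c) * a j) :
    ∑ i, a i * (p i - (cnt ω ({i} : Set (Fin K)) : ℝ)/n)
      ≤ Real.sqrt c * ∑ i ∈ Tset ω (fun i => ({i} : Set (Fin K))),
            (aOut ω a + Real.sqrt 2 * a i) * Real.sqrt ((cnt ω ({i} : Set (Fin K)) : ℝ)/n)
        + 2*c * (aOut ω a * ((Tset ω (fun i => ({i} : Set (Fin K)))).card : ℝ)
            + ∑ i ∈ Tset ω (fun i => ({i} : Set (Fin K))), a i) := by
  have hn' : (0:ℝ) < n := by exact_mod_cast hn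
  set Q : Fin K → ℝ := fun i => (cnt ω ({i} : Set (Fin K)) : ℝ)/n with hQdef
  have hq : ∀ i, (cnt ω ({i} : Set (Fin K)) : ℝ)/(n:ℝ) = Q i := fun i => rfl
  simp only [hq] at hL ⊢
  have hq0 : ∀ i, 0 ≤ Q i := fun i => by rw [hQdef]; positivity
  have hqsum : ∑ i, Q i = 1 := by
    rw [hQdef, ← Finset.sum_div, cnt_sum]
    field_simp
  have hq1 : ∀ i, Q i ≤ 1 := by
    intro i
    rw [← hqsum]
    exact Finset.single_le_sum (fun j _ => hq0 j) (Finset.mem_univ i)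
  set T := Tset ω (fun i => ({i} : Set (Fin K))) with hTdef
  have hTmem : ∀ i, i ∈ T ↔ 0 < cnt ω ({i} : Set (Fin K)) := by
    intro i
    rw [hTdef, Tset]
    simp
  have hqT : ∀ i, i ∉ T → Q i = 0 := by
    intro i hi
    rw [hTmem] at hi
    push_neg at hi
    rw [hQdef]
    simp [Nat.le_zero.1 hi]
  set v := aOut ω a with hvdef
  have hvout : ∀ i, i ∉ T → a i ≤ v := by
    intro i hi
    rw [hTmem] at hi; push_neg at hi
    have hicnt : cnt ω ({i} : Set (Fin K)) = 0 := Nat.le_zero.1 hi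
    have hmem : a i ∈ ((Finset.univ.filter fun i => cnt ω ({i} : Set (Fin K)) = 0).image a) :=
      Finset.mem_image_of_mem a (Finset.mem_filter.2 ⟨Finset.mem_univ i, hicnt⟩)
    rw [hvdef, aOut, dif_pos ⟨a i, hmem⟩]
    exact Finset.le_max' _ _ hmem
  have hv0 : 0 ≤ v := by
    rw [hvdef, aOut]
    split
    · rename_i h
      obtain ⟨j0, _, hj0⟩ := Finset.mem_image.1 (Finset.max'_mem _ h)
      rw [← hj0]; exact ha j0
    · exact le_refl 0
  -- T is nonempty
  have hTne : T.Nonempty := by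
    refine ⟨ω ⟨0, hn⟩, ?_⟩
    rw [hTmem]
    unfold cnt
    apply Finset.card_pos.2
    refine ⟨⟨0, hn⟩, ?_⟩
    simp
  have hTcard : (1:ℝ) ≤ (T.card : ℝ) := by exact_mod_cast Finset.card_pos.2 hTne
  have hsqT : (1:ℝ) ≤ ∑ i ∈ T, Real.sqrt (Q i) := by
    have h1 : ∑ i ∈ T, Q i = 1 := by
      rw [Finset.sum_subset (Finset.subset_univ T) (fun i _ hi => hqT i hi)]
      exact hqsum
    calc (1:ℝ) = ∑ i ∈ T, Q i := h1.symm
      _ ≤ ∑ i ∈ T, Real.sqrt (Q i) := by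
          refine Finset.sum_le_sum fun i _ => ?_
          calc Q i = Real.sqrt ((Q i)^2) := (Real.sqrt_sq (hq0 i)).symm
            _ ≤ Real.sqrt (Q i) := Real.sqrt_le_sqrt (by nlinarith [hq0 i, hq1 i])
  -- empirical form of the lower-tail events
  have hLq : ∀ i, p i - Q i ≤ Real.sqrt 2 * Real.sqrt c * Real.sqrt (Q i) + 2*c := by
    intro i
    have hd0 : (0:ℝ) < Real.sqrt (2*c) := Real.sqrt_pos.2 (by positivity)
    have hd2 : (Real.sqrt (2*c))^2 = 2*c := Real.sq_sqrt (by positivity)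
    have hx2 : (Real.sqrt (p i))^2 = p i := Real.sq_sqrt (hp i)
    have hy2 : (Real.sqrt (Q i))^2 = Q i := Real.sq_sqrt (hq0 i)
    have hdx : Real.sqrt (2*c*p i) = Real.sqrt (2*c) * Real.sqrt (p i) :=
      Real.sqrt_mul (by positivity) _
    have hkey := sqrt_shift (Real.sqrt_nonneg (Q i)) hd0 (Real.sqrt_nonneg (p i))
      (by rw [hx2, hy2]; rw [← hdx]; exact hL i)
    rw [hx2, hy2, hd2] at hkey
    have h2c : Real.sqrt (2*c) = Real.sqrt 2 * Real.sqrt c := Real.sqrt_mul (by norm_num) c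
    calc p i - Q i ≤ Real.sqrt (2*c) * Real.sqrt (Q i) + 2*c := hkey
      _ = Real.sqrt 2 * Real.sqrt c * Real.sqrt (Q i) + 2*c := by rw [h2c]
  -- identity : subtract v
  have hzero : ∑ i, a i * (p i - Q i) = ∑ i, (a i - v) * (p i - Q i) := by
    have h1 : ∑ i, (a i - v) * (p i - Q i)
        = ∑ i, a i * (p i - Q i) - v * (∑ i, (p i - Q i)) := by
      rw [Finset.mul_sum, ← Finset.sum_sub_distrib]
      exact Finset.sum_congr rfl fun i _ => by ring
    rw [h1, Finset.sum_sub_distrib, hpsum, hqsum]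
    ring
  have hsplit : ∀ i, (a i - v) * (p i - Q i)
      = max (a i - v) 0 * (p i - Q i) + max (v - a i) 0 * (Q i - p i) := by
    intro i
    rcases le_total (a i) v with h | h
    · rw [max_eq_right (by linarith : a i - v ≤ 0), max_eq_left (by linarith : (0:ℝ) ≤ v - a i)]
      ring
    · rw [max_eq_left (by linarith : (0:ℝ) ≤ a i - v), max_eq_right (by linarith : v - a i ≤ 0)]
      ring
  -- S1 bound
  have hS1 : ∑ i, max (a i - v) 0 * (p i - Q i)
      ≤ ∑ i ∈ T, a i * (Real.sqrt 2 * Real.sqrt c * Real.sqrt (Q i) + 2*c) := by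
    calc ∑ i, max (a i - v) 0 * (p i - Q i)
        ≤ ∑ i, (if i ∈ T then a i * (Real.sqrt 2 * Real.sqrt c * Real.sqrt (Q i) + 2*c) else 0) := by
          refine Finset.sum_le_sum fun i _ => ?_
          by_cases hiT : i ∈ T
          · rw [if_pos hiT]
            have hR0 : (0:ℝ) ≤ Real.sqrt 2 * Real.sqrt c * Real.sqrt (Q i) + 2*c := by positivity
            calc max (a i - v) 0 * (p i - Q i)
                ≤ max (a i - v) 0 * (Real.sqrt 2 * Real.sqrt c * Real.sqrt (Q i) + 2*c) :=
                  mul_le_mul_of_nonneg_left (hLq i) (le_max_right _ _)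
              _ ≤ a i * (Real.sqrt 2 * Real.sqrt c * Real.sqrt (Q i) + 2*c) :=
                  mul_le_mul_of_nonneg_right
                    (max_le (by linarith [hv0]) (ha i)) hR0
          · rw [if_neg hiT]
            rw [max_eq_right (by linarith [hvout i hiT] : a i - v ≤ 0), zero_mul]
      _ = ∑ i ∈ T, a i * (Real.sqrt 2 * Real.sqrt c * Real.sqrt (Q i) + 2*c) := by
          rw [Finset.sum_ite_mem, Finset.univ_inter]
  -- S2 bound
  have hS2 : ∑ i, max (v - a i) 0 * (Q i - p i) ≤ (Real.sqrt c + 2*c) * v := by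
    by_cases hne : ((Finset.univ.filter fun i => cnt ω ({i} : Set (Fin K)) = 0).image a).Nonempty
    · obtain ⟨j0, _, hj0⟩ := Finset.mem_image.1 (Finset.max'_mem _ hne)
      have hvj : v = a j0 := by rw [hvdef, aOut, dif_pos hne, ← hj0]
      have hBj := hB j0
      have hsum_eval : (∑ j', max (a j0 - a (ω j')) 0)/(n:ℝ)
          = ∑ i, Q i * max (a j0 - a i) 0 := by
        rw [cnt_sum_eval ω (fun i => max (a j0 - a i) 0)]
        rw [Finset.sum_div]
        refine Finset.sum_congr rfl fun i _ => ?_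
        rw [hQdef]
        ring
      rw [hsum_eval] at hBj
      have hgsub : ∑ i, max (v - a i) 0 * (Q i - p i)
          = (∑ i, Q i * max (a j0 - a i) 0) - ∑ i, p i * max (a j0 - a i) 0 := by
        rw [← Finset.sum_sub_distrib]
        refine Finset.sum_congr rfl fun i _ => ?_
        rw [hvj]; ring
      rw [hgsub, hvj]
      linarith [hBj]
    · have hvz : v = 0 := by rw [hvdef, aOut, dif_neg hne]
      have hmz : ∀ i, max (v - a i) 0 = 0 := fun i =>
        max_eq_right (by rw [hvz]; linarith [ha i])
      have : ∑ i, max (v - a i) 0 * (Q i - p i) = 0 :=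
        Finset.sum_eq_zero fun i _ => by rw [hmz i, zero_mul]
      rw [this, hvz]
      nlinarith [Real.sqrt_nonneg c, hc]
  -- assemble
  rw [hzero]
  have hsum2 : ∑ i, (a i - v) * (p i - Q i)
      = (∑ i, max (a i - v) 0 * (p i - Q i)) + ∑ i, max (v - a i) 0 * (Q i - p i) := by
    rw [← Finset.sum_add_distrib]
    exact Finset.sum_congr rfl fun i _ => hsplit i
  rw [hsum2]
  have e2 : ∑ i ∈ T, a i * (Real.sqrt 2 * Real.sqrt c * Real.sqrt (Q i) + 2*c)
      = Real.sqrt c * (∑ i ∈ T, Real.sqrt 2 * a i * Real.sqrt (Q i)) + 2*c * ∑ i ∈ T, a i := by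
    rw [Finset.mul_sum, Finset.mul_sum, ← Finset.sum_add_distrib]
    exact Finset.sum_congr rfl fun i _ => by ring
  have e1 : ∑ i ∈ T, (v + Real.sqrt 2 * a i) * Real.sqrt (Q i)
      = v * (∑ i ∈ T, Real.sqrt (Q i)) + ∑ i ∈ T, Real.sqrt 2 * a i * Real.sqrt (Q i) := by
    rw [Finset.mul_sum, ← Finset.sum_add_distrib]
    exact Finset.sum_congr rfl fun i _ => by ring
  rw [e1]
  have hc0 : (0:ℝ) ≤ Real.sqrt c := Real.sqrt_nonneg c
  have hfin1 : Real.sqrt c * v ≤ Real.sqrt c * (v * ∑ i ∈ T, Real.sqrt (Q i)) := by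
    have := mul_le_mul_of_nonneg_left hsqT (mul_nonneg hc0 hv0)
    nlinarith [this]
  have hfin2 : 2*c*v ≤ 2*c*(v * (T.card : ℝ)) := by
    have := mul_le_mul_of_nonneg_left hTcard (mul_nonneg (by linarith : (0:ℝ) ≤ 2*c) hv0)
    nlinarith [this]
  calc (∑ i, max (a i - v) 0 * (p i - Q i)) + ∑ i, max (v - a i) 0 * (Q i - p i)
      ≤ (Real.sqrt c * (∑ i ∈ T, Real.sqrt 2 * a i * Real.sqrt (Q i)) + 2*c * ∑ i ∈ T, a i)
        + (Real.sqrt c + 2*c) * v := by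
        rw [← e2]
        exact add_le_add hS1 hS2
    _ ≤ Real.sqrt c * (v * (∑ i ∈ T, Real.sqrt (Q i)) + ∑ i ∈ T, Real.sqrt 2 * a i * Real.sqrt (Q i))
        + 2*c * (v * (T.card : ℝ) + ∑ i ∈ T, a i) := by
        nlinarith [hfin1, hfin2]

end det

/-- Concentration for multinomial random vectors with
data-independent coefficients. -/
theorem statement16 {K : ℕ} (hK : 0 < K)
    (p : Fin K → ℝ) (hp : ∀ i, 0 ≤ p i) (hpsum : ∑ i, p i = 1)
    (μ : Measure (Fin K)) [IsProbabilityMeasure μ]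
    (hμ : ∀ i, μ {i} = ENNReal.ofReal (p i))
    (a : Fin K → ℝ) (ha : ∀ i, 0 ≤ a i)
    {n : ℕ} (hn : 0 < n) (δ : ℝ) (hδ : 0 < δ) :
    ENNReal.ofReal (1 - δ) ≤
      (Measure.pi fun _ : Fin n => μ)
        {ω | ∑ i, a i * (p i - (cnt ω ({i} : Set (Fin K)) : ℝ) / n) ≤
          Real.sqrt (Real.log (2 * K / δ) / n) *
              ∑ i ∈ Tset ω (fun i => ({i} : Set (Fin K))),
                (aOut ω a + Real.sqrt 2 * a i) *
                  Real.sqrt ((cnt ω ({i} : Set (Fin K)) : ℝ) / n)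
            + (2 * Real.log (2 * K / δ) / n) *
              (aOut ω a * ((Tset ω (fun i => ({i} : Set (Fin K)))).card : ℝ)
                + ∑ i ∈ Tset ω (fun i => ({i} : Set (Fin K))), a i)} := by
  classical
  by_cases hδ1 : 1 ≤ δ
  · have h0 : ENNReal.ofReal (1 - δ) = 0 := by
      rw [ENNReal.ofReal_eq_zero]; linarith
    rw [h0]; exact zero_le
  push_neg at hδ1
  have hK' : (1:ℝ) ≤ K := by exact_mod_cast hK
  have hn' : (0:ℝ) < n := by exact_mod_cast hn
  set c := Real.log (2*(K:ℝ)/δ) / n with hcdef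
  have hfrac : (1:ℝ) < 2*(K:ℝ)/δ := by
    rw [lt_div_iff₀ hδ]
    nlinarith
  have hlog : 0 < Real.log (2*(K:ℝ)/δ) := Real.log_pos hfrac
  have hc : 0 < c := by rw [hcdef]; positivity
  set P := (Measure.pi fun _ : Fin n => μ) with hPdef
  set L : Fin K → Set (Fin n → Fin K) := fun i =>
    {ω | p i - (cnt ω ({i} : Set (Fin K)) : ℝ)/n ≤ Real.sqrt (2*c*p i)} with hLdef
  set B : Fin K → Set (Fin n → Fin K) := fun j =>
    {ω | (∑ j', max (a j - a (ω j')) 0)/(n:ℝ)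
        ≤ (∑ i, p i * max (a j - a i) 0) + (Real.sqrt c + 2*c) * a j} with hBdef
  set G := (⋂ i, L i) ∩ (⋂ j, B j) with hGdef
  have hexp : Real.exp (-(n:ℝ)*c) = δ/(2*(K:ℝ)) := by
    have h1 : (n:ℝ)*c = Real.log (2*(K:ℝ)/δ) := by
      rw [hcdef]; field_simp
    rw [show -(n:ℝ)*c = -((n:ℝ)*c) by ring, h1, Real.exp_neg,
      Real.exp_log (by positivity), inv_div]
  have hLbd : ∀ i, P ((L i)ᶜ) ≤ ENNReal.ofReal (δ/(2*(K:ℝ))) := by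
    intro i
    have hcompl : (L i)ᶜ = {ω : Fin n → Fin K |
        Real.sqrt (2*c*p i) < p i - (cnt ω ({i} : Set (Fin K)) : ℝ)/n} := by
      ext ω
      simp only [hLdef, Set.mem_compl_iff, Set.mem_setOf_eq, not_le]
    rw [hcompl, ← hexp, hPdef]
    exact tailL μ p hp hpsum hμ hc hn i
  have hBbd : ∀ j, P ((B j)ᶜ) ≤ ENNReal.ofReal (δ/(2*(K:ℝ))) := by
    intro j
    have hcompl : (B j)ᶜ = {ω : Fin n → Fin K |
        (∑ i, p i * max (a j - a i) 0) + (Real.sqrt c + 2*c) * a j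
          < (∑ j', max (a j - a (ω j')) 0)/(n:ℝ)} := by
      ext ω; simp [hBdef, not_le]
    rw [hcompl, ← hexp, hPdef]
    exact tailB μ p hp hpsum hμ hc hn (fun i => max (a j - a i) 0) (a j) (ha j)
      (fun i => le_max_right _ _)
      (fun i => max_le (by linarith [ha i]) (ha j))
  have hGmeas : MeasurableSet G := meas_all
  have hGc : P (Gᶜ) ≤ ENNReal.ofReal δ := by
    have hG : Gᶜ = (⋃ i, (L i)ᶜ) ∪ (⋃ j, (B j)ᶜ) := by
      rw [hGdef, Set.compl_inter, Set.compl_iInter, Set.compl_iInter]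
    rw [hG]
    have hhalf : ∀ (s : Fin K → Set (Fin n → Fin K)),
        (∀ i, P ((s i)ᶜ) ≤ ENNReal.ofReal (δ/(2*(K:ℝ)))) →
        P (⋃ i, (s i)ᶜ) ≤ ENNReal.ofReal (δ/2) := by
      intro s hs
      have huniv : (⋃ i, (s i)ᶜ) = ⋃ i ∈ (Finset.univ : Finset (Fin K)), (s i)ᶜ := by
        ext x; simp
      calc P (⋃ i, (s i)ᶜ) = P (⋃ i ∈ (Finset.univ : Finset (Fin K)), (s i)ᶜ) := by
            rw [huniv]
        _ ≤ ∑ i ∈ (Finset.univ : Finset (Fin K)), P ((s i)ᶜ) := measure_biUnion_finset_le _ _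
        _ ≤ ∑ x ∈ (Finset.univ : Finset (Fin K)), ENNReal.ofReal (δ/(2*(K:ℝ))) :=
            Finset.sum_le_sum fun i _ => hs i
        _ = (K : ENNReal) * ENNReal.ofReal (δ/(2*(K:ℝ))) := by
            rw [Finset.sum_const, Finset.card_univ, Fintype.card_fin, nsmul_eq_mul]
        _ = ENNReal.ofReal (δ/2) := by
            rw [← ENNReal.ofReal_natCast K, ← ENNReal.ofReal_mul (by positivity)]
            congr 1
            have hKne : (K:ℝ) ≠ 0 := by positivity
            field_simp
    calc P ((⋃ i, (L i)ᶜ) ∪ (⋃ j, (B j)ᶜ))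
        ≤ P (⋃ i, (L i)ᶜ) + P (⋃ j, (B j)ᶜ) := measure_union_le _ _
      _ ≤ ENNReal.ofReal (δ/2) + ENNReal.ofReal (δ/2) :=
          add_le_add (hhalf L hLbd) (hhalf B hBbd)
      _ = ENNReal.ofReal δ := by
          rw [← ENNReal.ofReal_add (by positivity) (by positivity)]
          norm_num
  have hsub : G ⊆ {ω : Fin n → Fin K |
      ∑ i, a i * (p i - (cnt ω ({i} : Set (Fin K)) : ℝ) / n) ≤
        Real.sqrt c *
            ∑ i ∈ Tset ω (fun i => ({i} : Set (Fin K))),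
              (aOut ω a + Real.sqrt 2 * a i) *
                Real.sqrt ((cnt ω ({i} : Set (Fin K)) : ℝ) / n)
          + (2 * Real.log (2 * (K:ℝ) / δ) / n) *
            (aOut ω a * ((Tset ω (fun i => ({i} : Set (Fin K)))).card : ℝ)
              + ∑ i ∈ Tset ω (fun i => ({i} : Set (Fin K))), a i)} := by
    intro ω hω
    have hLω : ∀ i, p i - (cnt ω ({i} : Set (Fin K)) : ℝ)/n ≤ Real.sqrt (2*c*p i) :=
      fun i => Set.mem_iInter.1 hω.1 i
    have hBω : ∀ j, (∑ j', max (a j - a (ω j')) 0)/(n:ℝ)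
        ≤ (∑ i, p i * max (a j - a i) 0) + (Real.sqrt c + 2*c) * a j :=
      fun j => Set.mem_iInter.1 hω.2 j
    have hdet := det_main p hp hpsum a ha hc hn ω hLω hBω
    simp only [Set.mem_setOf_eq]
    have h2c : 2 * Real.log (2 * (K:ℝ) / δ) / n = 2*c := by rw [hcdef]; ring
    rw [h2c]
    exact hdet
  calc ENNReal.ofReal (1-δ) = 1 - ENNReal.ofReal δ := by
        rw [ENNReal.ofReal_sub 1 hδ.le, ENNReal.ofReal_one]
    _ ≤ 1 - P Gᶜ := tsub_le_tsub_left hGc 1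
    _ = P G := by
        rw [prob_compl_eq_one_sub hGmeas]
        rw [ENNReal.sub_sub_cancel ENNReal.one_ne_top prob_le_one]
    _ ≤ _ := measure_mono hsub
end
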